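/- arXiv:2205.13179 — 9 statements merged into one kernel-verified Lean document; each statement's English description precedes it below -/
import Mathlib

section
/- Let A_n be an n×n complex matrix for each n ∈ ℕ. Then {A_n} converges to the zero sequence in Type 2 strong cluster sense if and only if for each ε > 0 there exist two positive integers N₁ and N₂ such that for all n > N₂, except at most N₁ singular values, all other singular values of A_n belong to the interval [0, ε). -/
open MeasureTheory Matrix AddCircle
open scoped Real ComplexOrder

noncomputable section

instance : Fact (0 < 2 * Real.pi) := ⟨by positivity⟩

/-- The circle of circumference `2π`. -/
abbrev 𝕋 : Type := AddCircle (2 * Real.pi)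

/-- The `n × n` Toeplitz matrix of `f`, with `(i,j)` entry the Fourier coefficient
`f̂(i - j)`. -/
def toeplitz (n : ℕ) (f : 𝕋 → ℂ) : Matrix (Fin n) (Fin n) ℂ :=
  Matrix.of fun i j : Fin n => fourierCoeff f (((i : ℕ) : ℤ) - ((j : ℕ) : ℤ))

/-- The operator (spectral) norm of a complex `n × n` matrix. -/
def opNorm {n : ℕ} (A : Matrix (Fin n) (Fin n) ℂ) : ℝ :=
  ‖Matrix.toEuclideanCLM (𝕜 := ℂ) A‖

/-- A sequence of matrices `{Aₙ}` converges to the zero sequence in Type 2 strong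
cluster sense: for every `ε > 0` there are `N₁, N₂` such that for `n > N₂` one can
split `Aₙ = Rₙ + Eₙ` with `rank Rₙ ≤ N₁` and `‖Eₙ‖ < ε`. -/
def Type2StrongCluster (A : ∀ n : ℕ, Matrix (Fin n) (Fin n) ℂ) : Prop :=
  ∀ ε > (0 : ℝ), ∃ N₁ N₂ : ℕ, ∀ n : ℕ, N₂ < n →
    ∃ R E : Matrix (Fin n) (Fin n) ℂ, A n = R + E ∧ R.rank ≤ N₁ ∧ opNorm E < ε

/-- A sequence of Hermitian matrices `{Aₙ}` converges to the zero sequence in Type 1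
strong cluster sense: for every `ε > 0` there are `N₁, N₂` such that for `n > N₂`, at
most `N₁` of the eigenvalues of `Aₙ` lie outside `(-ε, ε)`. -/
def Type1StrongCluster (A : ∀ n : ℕ, Matrix (Fin n) (Fin n) ℂ)
    (hA : ∀ n, (A n).IsHermitian) : Prop :=
  ∀ ε > (0 : ℝ), ∃ N₁ N₂ : ℕ, ∀ n : ℕ, N₂ < n →
    {i : Fin n | ε ≤ |(hA n).eigenvalues i|}.ncard ≤ N₁

/-- `f` has vanishing mean oscillation: with `F` the `2π`-periodic lift of `f`, the
`L²` mean oscillation of `F` over intervals `I` tends to `0` as `|I| → 0`. -/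
def VMO (f : 𝕋 → ℂ) : Prop :=
  ∀ ε > (0 : ℝ), ∃ δ > (0 : ℝ), ∀ a b : ℝ, a < b → b - a < δ →
    Real.sqrt ((b - a)⁻¹ *
      ∫ t in a..b, ‖f (t : 𝕋) - (b - a)⁻¹ • ∫ s in a..b, f (s : 𝕋)‖ ^ 2) < ε


/-- The singular values of a complex `n × n` matrix `A`: the nonnegative square roots
of the eigenvalues of the Hermitian positive semidefinite matrix `Aᴴ * A`. -/
def singularValues {n : ℕ} (A : Matrix (Fin n) (Fin n) ℂ) (i : Fin n) : ℝ :=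
  Real.sqrt ((Matrix.isHermitian_conjTranspose_mul_self A).eigenvalues i)

section T2AuxSection

open Module

namespace T2Aux

variable {n : ℕ}

variable {n : ℕ}

lemma rank_eq_finrank_range_CLM (M : Matrix (Fin n) (Fin n) ℂ) :
    M.rank = finrank ℂ (LinearMap.range
      ((Matrix.toEuclideanCLM (𝕜 := ℂ) M : EuclideanSpace ℂ (Fin n) →L[ℂ] EuclideanSpace ℂ (Fin n))
        : EuclideanSpace ℂ (Fin n) →ₗ[ℂ] EuclideanSpace ℂ (Fin n))) := by
  rw [Matrix.coe_toEuclideanCLM_eq_toEuclideanLin,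
    Matrix.rank_eq_finrank_range_toLin M ((PiLp.basisFun 2 ℂ (Fin n)))
      ((PiLp.basisFun 2 ℂ (Fin n))), Matrix.toEuclideanLin_eq_toLin]

lemma inner_L_L (M : Matrix (Fin n) (Fin n) ℂ) (x y : EuclideanSpace ℂ (Fin n)) :
    (inner ℂ (Matrix.toEuclideanCLM (𝕜 := ℂ) M x) (Matrix.toEuclideanCLM (𝕜 := ℂ) M y) : ℂ)
      = inner ℂ (Matrix.toEuclideanCLM (𝕜 := ℂ) (Mᴴ * M) x) y := by
  rw [_root_.map_mul, ← Matrix.star_eq_conjTranspose, map_star, ContinuousLinearMap.mul_apply,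
    ContinuousLinearMap.star_eq_adjoint, ContinuousLinearMap.adjoint_inner_left]

lemma L_apply_eigen {M : Matrix (Fin n) (Fin n) ℂ} (hM : M.IsHermitian) (j : Fin n) :
    Matrix.toEuclideanCLM (𝕜 := ℂ) M (hM.eigenvectorBasis j)
      = (hM.eigenvalues j : ℂ) • hM.eigenvectorBasis j := by
  apply (WithLp.equiv 2 ((Fin n) → ℂ)).injective
  change M *ᵥ ⇑(hM.eigenvectorBasis j) = WithLp.ofLp ((hM.eigenvalues j : ℂ) • hM.eigenvectorBasis j)
  rw [hM.mulVec_eigenvectorBasis, WithLp.ofLp_smul,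
    RCLike.real_smul_eq_coe_smul (K := ℂ)]
  rfl

lemma parseval (b : OrthonormalBasis (Fin n) ℂ (EuclideanSpace ℂ (Fin n)))
    (x : EuclideanSpace ℂ (Fin n)) :
    ‖x‖ ^ 2 = ∑ i, ‖(inner ℂ (b i) x : ℂ)‖ ^ 2 := by
  have h : ‖x‖ = ‖b.repr x‖ := (b.repr.norm_map x).symm
  rw [h, EuclideanSpace.norm_eq, Real.sq_sqrt (by positivity)]
  exact Finset.sum_congr rfl fun i _ => by rw [b.repr_apply_apply]

lemma norm_sq_L (M : Matrix (Fin n) (Fin n) ℂ) (x : EuclideanSpace ℂ (Fin n)) :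
    ‖Matrix.toEuclideanCLM (𝕜 := ℂ) M x‖ ^ 2
      = ∑ i, (Matrix.isHermitian_conjTranspose_mul_self M).eigenvalues i
          * ‖(inner ℂ ((Matrix.isHermitian_conjTranspose_mul_self M).eigenvectorBasis i) x : ℂ)‖ ^ 2 := by
  set hB := Matrix.isHermitian_conjTranspose_mul_self M with hBdef
  set b := hB.eigenvectorBasis with hbdef
  set lam := hB.eigenvalues with hlamdef
  set c : Fin n → ℂ := fun i => inner ℂ (b i) x with hcdef
  have hx : ∑ i, c i • b i = x := b.sum_repr' x
  have h1 : ‖Matrix.toEuclideanCLM (𝕜 := ℂ) M x‖ ^ 2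
      = RCLike.re (inner ℂ (Matrix.toEuclideanCLM (𝕜 := ℂ) (Mᴴ * M) x) x : ℂ) := by
    rw [← inner_L_L, inner_self_eq_norm_sq]
  rw [h1]
  conv_lhs => rw [← hx]
  rw [map_sum]
  have h2 : ∀ i, Matrix.toEuclideanCLM (𝕜 := ℂ) (Mᴴ * M) (c i • b i)
      = ((lam i : ℂ) * c i) • b i := by
    intro i
    rw [_root_.map_smul, L_apply_eigen hB, smul_smul, mul_comm]
  simp_rw [h2]
  have h3 : (inner ℂ (∑ i, ((lam i : ℂ) * c i) • b i) (∑ i, c i • b i) : ℂ)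
      = ∑ i, (starRingEnd ℂ) ((lam i : ℂ) * c i) * c i :=
    b.orthonormal.inner_sum _ _ _
  rw [h3, map_sum]
  have h4 : ∀ i, RCLike.re ((starRingEnd ℂ) ((lam i : ℂ) * c i) * c i)
      = lam i * ‖c i‖ ^ 2 := by
    intro i
    have : (starRingEnd ℂ) ((lam i : ℂ) * c i) * c i = ((lam i * ‖c i‖ ^ 2 : ℝ) : ℂ) := by
      rw [_root_.map_mul, mul_assoc, RCLike.conj_mul, Complex.conj_ofReal]
      push_cast
      norm_num [RCLike.ofReal_alg]
    rw [this]
    exact Complex.ofReal_re _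
  exact Finset.sum_congr rfl fun i _ => h4 i

lemma sqrt_le_of_sq_le_sq {a b : ℝ} (ha : 0 ≤ a) (hb : 0 ≤ b) (h : a ^ 2 ≤ b ^ 2) : a ≤ b := by
  have := Real.sqrt_le_sqrt h
  rwa [Real.sqrt_sq ha, Real.sqrt_sq hb] at this

end T2Aux

end T2AuxSection

open T2Aux
open Module

set_option maxHeartbeats 1000000
set_option synthInstance.maxHeartbeats 400000

/-- Lemma 1.5 of the paper: `{Aₙ}` converges to the zero sequence in
Type 2 strong cluster sense iff for each `ε > 0` there are two positive integers
`N₁, N₂` such that for all `n > N₂`, except at most `N₁` singular values, all other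
singular values of `Aₙ` lie in `[0, ε)`. -/
theorem type2StrongCluster_iff_singularValues_cluster
    (A : ∀ n : ℕ, Matrix (Fin n) (Fin n) ℂ) :
    Type2StrongCluster A ↔
      ∀ ε > (0 : ℝ), ∃ N₁ N₂ : ℕ, 0 < N₁ ∧ 0 < N₂ ∧ ∀ n : ℕ, N₂ < n →
        {i : Fin n | singularValues (A n) i ∉ Set.Ico (0 : ℝ) ε}.ncard ≤ N₁ := by
  classical
  constructor
  · intro h
    intro ε hε
    obtain ⟨N₁, N₂, hN⟩ := h ε hε
    refine ⟨N₁ + 1, N₂ + 1, Nat.succ_pos _, Nat.succ_pos _, fun n hn => ?_⟩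
    obtain ⟨R, Em, hsum, hrank, hnorm⟩ := hN n (by omega)
    have hset : {i : Fin n | singularValues (A n) i ∉ Set.Ico (0 : ℝ) ε}
        = {i : Fin n | ε ≤ singularValues (A n) i} := by
      ext i
      simp only [Set.mem_setOf_eq, Set.mem_Ico, not_and, not_lt]
      constructor
      · intro h'; exact h' (Real.sqrt_nonneg _)
      · intro h' _; exact h'
    rw [hset]
    have hcard : {i : Fin n | ε ≤ singularValues (A n) i}.ncard
        = (Finset.univ.filter fun i : Fin n => ε ≤ singularValues (A n) i).card := by
      rw [Set.ncard_eq_toFinset_card']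
      simp [Set.toFinset_setOf]
    rw [hcard]
    set S := Finset.univ.filter fun i : Fin n => ε ≤ singularValues (A n) i with hSdef
    suffices hS : S.card ≤ N₁ by omega
    by_contra hcon
    push_neg at hcon
    -- setup
    set hB := Matrix.isHermitian_conjTranspose_mul_self (A n) with hBdef
    set b := hB.eigenvectorBasis with hbdef
    set lam := hB.eigenvalues with hlamdef
    set v : {i // i ∈ S} → EuclideanSpace ℂ (Fin n) := fun i => b i with hvdef
    have horth : Orthonormal ℂ v := b.orthonormal.comp _ Subtype.val_injective
    set W := Submodule.span ℂ (Set.range v) with hWdef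
    have hWrank : finrank ℂ W = S.card := by
      rw [finrank_span_eq_card horth.linearIndependent, Fintype.card_coe]
    set f : W →ₗ[ℂ] EuclideanSpace ℂ (Fin n) :=
      ((Matrix.toEuclideanCLM (𝕜 := ℂ) R :
          EuclideanSpace ℂ (Fin n) →L[ℂ] EuclideanSpace ℂ (Fin n)) :
        EuclideanSpace ℂ (Fin n) →ₗ[ℂ] EuclideanSpace ℂ (Fin n)).comp W.subtype with hfdef
    have hrange : finrank ℂ (LinearMap.range f) ≤ N₁ := by
      calc finrank ℂ (LinearMap.range f)
          ≤ finrank ℂ (LinearMap.range ((Matrix.toEuclideanCLM (𝕜 := ℂ) R :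
              EuclideanSpace ℂ (Fin n) →L[ℂ] EuclideanSpace ℂ (Fin n)) :
              EuclideanSpace ℂ (Fin n) →ₗ[ℂ] EuclideanSpace ℂ (Fin n))) :=
            Submodule.finrank_mono (LinearMap.range_comp_le_range _ _)
        _ = R.rank := (rank_eq_finrank_range_CLM R).symm
        _ ≤ N₁ := hrank
    have hker : 0 < finrank ℂ (LinearMap.ker f) := by
      have := LinearMap.finrank_range_add_finrank_ker f
      rw [hWrank] at this
      omega
    haveI hnt : Nontrivial (LinearMap.ker f) := Module.finrank_pos_iff.mp hker
    obtain ⟨x, hx0⟩ := exists_ne (0 : LinearMap.ker f)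
    set y : EuclideanSpace ℂ (Fin n) := ((x : W) : EuclideanSpace ℂ (Fin n)) with hydef
    have hy0 : y ≠ 0 := by
      simp only [hydef, ne_eq, ZeroMemClass.coe_eq_zero]
      exact fun h' => hx0 (Subtype.coe_injective (by simpa using h'))
    have hRy : Matrix.toEuclideanCLM (𝕜 := ℂ) R y = 0 := x.2
    have hyW : y ∈ W := (x : W).2
    -- inner products vanish off S
    have hvan' : ∀ z, z ∈ W → ∀ i : Fin n, i ∉ S → (inner ℂ (b i) z : ℂ) = 0 := by
      intro z hz i hi
      induction hz using Submodule.span_induction with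
      | mem w hw =>
          obtain ⟨j, rfl⟩ := hw
          exact b.orthonormal.2 (fun h' => hi (h' ▸ j.2))
      | zero => exact inner_zero_right _
      | add u w _ _ hu hw => rw [inner_add_right, hu, hw, add_zero]
      | smul c u _ hu => rw [inner_smul_right, hu, mul_zero]
    have hvan : ∀ i : Fin n, i ∉ S → (inner ℂ (b i) y : ℂ) = 0 := fun i hi => hvan' y hyW i hi
    -- lower bound
    have hlow : (ε * ‖y‖) ^ 2 ≤ ‖Matrix.toEuclideanCLM (𝕜 := ℂ) (A n) y‖ ^ 2 := by
      rw [norm_sq_L (A n) y, mul_pow, parseval b y, Finset.mul_sum]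
      apply Finset.sum_le_sum
      intro i _
      by_cases hi : i ∈ S
      · apply mul_le_mul_of_nonneg_right _ (by positivity)
        have hsv : ε ≤ Real.sqrt (lam i) := (Finset.mem_filter.mp hi).2
        have : ε ^ 2 ≤ Real.sqrt (lam i) ^ 2 := pow_le_pow_left₀ hε.le hsv 2
        rwa [Real.sq_sqrt (Matrix.eigenvalues_conjTranspose_mul_self_nonneg (A n) i)] at this
      · rw [hvan i hi]
        simp
    have hlow' : ε * ‖y‖ ≤ ‖Matrix.toEuclideanCLM (𝕜 := ℂ) (A n) y‖ :=
      sqrt_le_of_sq_le_sq (by positivity) (norm_nonneg _) hlow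
    -- upper bound
    have hup : ‖Matrix.toEuclideanCLM (𝕜 := ℂ) (A n) y‖ < ε * ‖y‖ := by
      have hAy : Matrix.toEuclideanCLM (𝕜 := ℂ) (A n) y
          = Matrix.toEuclideanCLM (𝕜 := ℂ) Em y := by
        rw [hsum, map_add, ContinuousLinearMap.add_apply, hRy, zero_add]
      rw [hAy]
      calc ‖Matrix.toEuclideanCLM (𝕜 := ℂ) Em y‖
          ≤ opNorm Em * ‖y‖ := (Matrix.toEuclideanCLM (𝕜 := ℂ) Em).le_opNorm y
        _ < ε * ‖y‖ := by
            apply mul_lt_mul_of_pos_right hnorm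
            exact norm_pos_iff.mpr hy0
    linarith
  · intro h
    intro ε hε
    obtain ⟨N₁, N₂, -, hN₂, hN⟩ := h ε hε
    refine ⟨N₁, N₂, fun n hn => ?_⟩
    have hn0 : 0 < n := lt_trans hN₂ hn
    have hne : Nonempty (Fin n) := ⟨⟨0, hn0⟩⟩
    set hB := Matrix.isHermitian_conjTranspose_mul_self (A n) with hBdef
    set b := hB.eigenvectorBasis with hbdef
    set lam := hB.eigenvalues with hlamdef
    set sv := singularValues (A n) with hsvdef
    have hlam0 : ∀ i, 0 ≤ lam i := fun i =>
      Matrix.eigenvalues_conjTranspose_mul_self_nonneg (A n) i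
    have hsv0 : ∀ i, 0 ≤ sv i := fun i => Real.sqrt_nonneg _
    have hsvsq : ∀ i, lam i = sv i ^ 2 := fun i => (Real.sq_sqrt (hlam0 i)).symm
    set S := Finset.univ.filter fun i : Fin n => ε ≤ sv i with hSdef
    -- card bound from hypothesis
    have hScard : S.card ≤ N₁ := by
      have h1 := hN n hn
      have hset : {i : Fin n | singularValues (A n) i ∉ Set.Ico (0 : ℝ) ε}
          = {i : Fin n | ε ≤ sv i} := by
        ext i
        simp only [Set.mem_setOf_eq, Set.mem_Ico, not_and, not_lt, hsvdef]
        constructor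
        · intro h'; exact h' (Real.sqrt_nonneg _)
        · intro h' _; exact h'
      rw [hset] at h1
      have hcard : {i : Fin n | ε ≤ sv i}.ncard
          = (Finset.univ.filter fun i : Fin n => ε ≤ sv i).card := by
        rw [Set.ncard_eq_toFinset_card']
        simp [Set.toFinset_setOf]
      rwa [hcard] at h1
    -- the projection onto small eigenvectors
    set Q : EuclideanSpace ℂ (Fin n) →L[ℂ] EuclideanSpace ℂ (Fin n) :=
      ∑ i ∈ Sᶜ, (innerSL ℂ (b i)).smulRight (b i) with hQdef
    have hQapp : ∀ x, Q x = ∑ i ∈ Sᶜ, (inner ℂ (b i) x : ℂ) • b i := by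
      intro x
      simp [hQdef, ContinuousLinearMap.sum_apply]
    set LA := Matrix.toEuclideanCLM (𝕜 := ℂ) (A n) with hLAdef
    set R : Matrix (Fin n) (Fin n) ℂ :=
      (Matrix.toEuclideanCLM (𝕜 := ℂ)).symm (LA.comp (1 - Q)) with hRdef
    set Em : Matrix (Fin n) (Fin n) ℂ :=
      (Matrix.toEuclideanCLM (𝕜 := ℂ)).symm (LA.comp Q) with hEdef
    have hLR : Matrix.toEuclideanCLM (𝕜 := ℂ) R = LA.comp (1 - Q) :=
      (Matrix.toEuclideanCLM (𝕜 := ℂ) (n := Fin n)).apply_symm_apply _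
    have hLE : Matrix.toEuclideanCLM (𝕜 := ℂ) Em = LA.comp Q :=
      (Matrix.toEuclideanCLM (𝕜 := ℂ) (n := Fin n)).apply_symm_apply _
    refine ⟨R, Em, ?_, ?_, ?_⟩
    · -- A n = R + Em
      rw [hRdef, hEdef, ← map_add, ← ContinuousLinearMap.comp_add, sub_add_cancel,
        ContinuousLinearMap.one_def, ContinuousLinearMap.comp_id, hLAdef,
        StarAlgEquiv.symm_apply_apply]
    · -- rank bound
      rw [rank_eq_finrank_range_CLM, hLR]
      have hr1 : LinearMap.range ((LA.comp (1 - Q) :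
            EuclideanSpace ℂ (Fin n) →L[ℂ] EuclideanSpace ℂ (Fin n)) :
            EuclideanSpace ℂ (Fin n) →ₗ[ℂ] EuclideanSpace ℂ (Fin n))
          = Submodule.map (LA : EuclideanSpace ℂ (Fin n) →ₗ[ℂ] EuclideanSpace ℂ (Fin n))
              (LinearMap.range (((1 - Q) :
                EuclideanSpace ℂ (Fin n) →L[ℂ] EuclideanSpace ℂ (Fin n)) :
                EuclideanSpace ℂ (Fin n) →ₗ[ℂ] EuclideanSpace ℂ (Fin n))) := by
        rw [ContinuousLinearMap.toLinearMap_comp, LinearMap.range_comp]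
      rw [hr1]
      calc finrank ℂ (Submodule.map _ _)
          ≤ finrank ℂ (LinearMap.range (((1 - Q) :
              EuclideanSpace ℂ (Fin n) →L[ℂ] EuclideanSpace ℂ (Fin n)) :
              EuclideanSpace ℂ (Fin n) →ₗ[ℂ] EuclideanSpace ℂ (Fin n))) :=
            Submodule.finrank_map_le _ _
        _ ≤ finrank ℂ (Submodule.span ℂ ((S.image b : Finset (EuclideanSpace ℂ (Fin n))) :
              Set (EuclideanSpace ℂ (Fin n)))) := by
            apply Submodule.finrank_mono
            rintro z ⟨x, rfl⟩
            simp only [ContinuousLinearMap.coe_coe]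
            have hx : ((1 - Q) : EuclideanSpace ℂ (Fin n) →L[ℂ] EuclideanSpace ℂ (Fin n)) x
                = ∑ i ∈ S, (inner ℂ (b i) x : ℂ) • b i := by
              have hsplit : (∑ i ∈ S, (inner ℂ (b i) x : ℂ) • b i)
                  + ∑ i ∈ Sᶜ, (inner ℂ (b i) x : ℂ) • b i = x := by
                rw [Finset.sum_add_sum_compl]
                exact b.sum_repr' x
              simp only [ContinuousLinearMap.sub_apply, ContinuousLinearMap.one_apply, hQapp]
              exact sub_eq_of_eq_add hsplit.symm
            rw [hx]
            apply Submodule.sum_mem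
            intro i hi
            apply Submodule.smul_mem
            apply Submodule.subset_span
            exact Finset.mem_coe.mpr (Finset.mem_image_of_mem b hi)
        _ ≤ (S.image b).card := finrank_span_finset_le_card _
        _ ≤ S.card := Finset.card_image_le
        _ ≤ N₁ := hScard
    · -- norm bound
      have hopE : opNorm Em = ‖LA.comp Q‖ := by rw [opNorm, hLE]
      rw [hopE]
      -- the sup of small singular values
      set g : Fin n → ℝ := fun i => if ε ≤ sv i then 0 else sv i with hgdef
      set δ := Finset.univ.sup' Finset.univ_nonempty g with hδdef
      have hδε : δ < ε := by
        rw [hδdef, Finset.sup'_lt_iff]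
        intro i _
        by_cases hi : ε ≤ sv i
        · simpa [hgdef, hi] using hε
        · simpa [hgdef, hi] using lt_of_not_ge hi
      have hδ0 : 0 ≤ δ := by
        obtain ⟨i⟩ := hne
        refine le_trans ?_ (Finset.le_sup' g (Finset.mem_univ i))
        by_cases hi : ε ≤ sv i <;> simp [hgdef, hi, hsv0 i]
      have hbound : ∀ x, ‖(LA.comp Q) x‖ ≤ δ * ‖x‖ := by
        intro x
        apply sqrt_le_of_sq_le_sq (norm_nonneg _) (by positivity)
        rw [ContinuousLinearMap.comp_apply, hLAdef, norm_sq_L (A n) (Q x), mul_pow,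
          parseval b x, Finset.mul_sum]
        apply Finset.sum_le_sum
        intro i _
        have hinner : (inner ℂ (b i) (Q x) : ℂ) = if i ∈ Sᶜ then (inner ℂ (b i) x : ℂ) else 0 := by
          rw [hQapp, inner_sum]
          simp_rw [inner_smul_right, orthonormal_iff_ite.mp b.orthonormal, mul_ite, mul_one,
            mul_zero]
          rw [Finset.sum_ite_eq]
        by_cases hi : i ∈ Sᶜ
        · rw [hinner, if_pos hi]
          have hiS : ¬ ε ≤ sv i := by
            simp only [Finset.mem_compl, hSdef, Finset.mem_filter, Finset.mem_univ,
              true_and] at hi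
            exact hi
          have hsvδ : sv i ≤ δ := by
            refine le_trans ?_ (Finset.le_sup' g (Finset.mem_univ i))
            simp [hgdef, hiS]
          have : lam i ≤ δ ^ 2 := by
            rw [hsvsq i]
            exact pow_le_pow_left₀ (hsv0 i) hsvδ 2
          exact mul_le_mul this le_rfl (by positivity) (by positivity)
        · rw [hinner, if_neg hi]
          have h0 : lam i * ‖(0 : ℂ)‖ ^ 2 = 0 := by simp
          rw [h0]
          positivity
      calc ‖LA.comp Q‖ ≤ δ := ContinuousLinearMap.opNorm_le_bound _ hδ0 hbound
        _ < ε := hδε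
end
end

section
/- Let f and g be square-integrable functions on the circle 𝕋 = AddCircle (2π), so that fg is integrable. Then for every n ≥ 1 and all 0 ≤ j, k < n, one has the identity (fg)^(j−k) − Σ_{l=0}^{n−1} f̂(j−l)·ĝ(l−k) = Σ_{m=1}^{∞} f̂(j+m)·ĝ(−m−k) + Σ_{m=0}^{∞} f̂(j−n−m)·ĝ(n+m−k), where both infinite series converge absolutely. (This is the entrywise form of Widom's identity T_n(fg) − T_n(f)T_n(g) = P_n H_{f̄}* H_g P_n + Q_n H_{\overline{f̃}}* H_{g̃} Q_n.) -/
open MeasureTheory Matrix AddCircle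
open scoped Real ComplexOrder

noncomputable section

open scoped ComplexConjugate InnerProductSpace

lemma fourierCoeff_congr_ae' {f g : 𝕋 → ℂ} (h : f =ᵐ[haarAddCircle] g) (n : ℤ) :
    fourierCoeff f n = fourierCoeff g n := by
  unfold fourierCoeff
  exact integral_congr_ae (h.mono fun x hx => by simp [hx])

lemma summable_sq_fourierCoeff {f : 𝕋 → ℂ} (hf : MemLp f 2 haarAddCircle) :
    Summable fun i : ℤ => ‖fourierCoeff f i‖ ^ 2 := by
  have h1 : Memℓp (fun i => fourierBasis.repr (hf.toLp f) i) 2 := (fourierBasis.repr (hf.toLp f)).2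
  have h2 := (memℓp_gen_iff (p := 2) (by norm_num)).mp h1
  have h3 : Summable fun i : ℤ => ‖fourierCoeff (↑(hf.toLp f) : 𝕋 → ℂ) i‖ ^ 2 := by
    refine h2.congr fun i => ?_
    rw [fourierBasis_repr]
    norm_num
  refine h3.congr fun i => ?_
  rw [fourierCoeff_congr_ae' (hf.coeFn_toLp) i]

lemma inner_eq_tsum_fourierCoeff (F G : Lp ℂ 2 (haarAddCircle : Measure 𝕋)) :
    (inner ℂ F G : ℂ) = ∑' i : ℤ, conj (fourierCoeff (F : 𝕋 → ℂ) i) * fourierCoeff (G : 𝕋 → ℂ) i := by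
  rw [← fourierBasis.repr.inner_map_map F G, lp.inner_eq_tsum]
  exact tsum_congr fun i => by rw [fourierBasis_repr, fourierBasis_repr, RCLike.inner_apply, mul_comm]

set_option maxHeartbeats 1000000 in
lemma fourierCoeff_mul {f g : 𝕋 → ℂ} (hf : MemLp f 2 haarAddCircle)
    (hg : MemLp g 2 haarAddCircle) (m : ℤ) :
    fourierCoeff (fun x => f x * g x) m
      = ∑' i : ℤ, fourierCoeff f (-i) * fourierCoeff g (i + m) := by
  set A : 𝕋 → ℂ := fun x => conj (f x) with hA_def
  have hA : MemLp A 2 haarAddCircle := by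
    refine hf.of_le_mul (c := 1) (RCLike.continuous_conj.comp_aestronglyMeasurable hf.1)
      (Filter.Eventually.of_forall fun x => ?_)
    simp [A]
  set B : 𝕋 → ℂ := fun x => fourier (-m) x * g x with hB_def
  have hφ : MemLp (fun x : 𝕋 => (fourier (-m) x : ℂ)) ⊤ haarAddCircle := by
    refine memLp_top_of_bound ((fourier (-m)).continuous.aestronglyMeasurable) 1
      (Filter.Eventually.of_forall fun x => ?_)
    simp [Circle.norm_coe]
  have hB : MemLp B 2 haarAddCircle := by
    have h := MemLp.smul (μ := (haarAddCircle : Measure 𝕋)) (r := 2)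
      (f := g) (φ := fun x : 𝕋 => (fourier (-m) x : ℂ)) hg hφ
    exact h
  have key : (inner ℂ (hA.toLp A) (hB.toLp B) : ℂ) = fourierCoeff (fun x => f x * g x) m := by
    rw [L2.inner_def]
    unfold fourierCoeff
    refine integral_congr_ae ?_
    filter_upwards [hA.coeFn_toLp, hB.coeFn_toLp] with x h1 h2
    rw [h1, h2]
    simp only [A, B, RCLike.inner_apply, RCLike.conj_conj, smul_eq_mul]
    ring
  have key2 : (inner ℂ (hA.toLp A) (hB.toLp B) : ℂ)
      = ∑' i : ℤ, fourierCoeff f (-i) * fourierCoeff g (i + m) := by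
    rw [inner_eq_tsum_fourierCoeff]
    refine tsum_congr fun i => ?_
    have e1 : fourierCoeff (↑(hA.toLp A) : 𝕋 → ℂ) i = conj (fourierCoeff f (-i)) := by
      rw [fourierCoeff_congr_ae' (hA.coeFn_toLp) i]
      unfold fourierCoeff
      rw [← integral_conj]
      refine integral_congr_ae (Filter.Eventually.of_forall fun x => ?_)
      simp only [A, smul_eq_mul, _root_.map_mul, neg_neg, ← fourier_neg]
    have e2 : fourierCoeff (↑(hB.toLp B) : 𝕋 → ℂ) i = fourierCoeff g (i + m) := by
      rw [fourierCoeff_congr_ae' (hB.coeFn_toLp) i]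
      unfold fourierCoeff
      refine integral_congr_ae (Filter.Eventually.of_forall fun x => ?_)
      simp only [B, smul_eq_mul, ← mul_assoc, ← fourier_add, neg_add]
    rw [e1, e2, RCLike.conj_conj]
  rw [← key, key2]

lemma summable_coeff_mul {f g : 𝕋 → ℂ} (hf : MemLp f 2 haarAddCircle)
    (hg : MemLp g 2 haarAddCircle) (a b : ℤ) :
    Summable fun l : ℤ => ‖fourierCoeff f (a - l)‖ * ‖fourierCoeff g (l - b)‖ := by
  have hf2 := summable_sq_fourierCoeff hf
  have hg2 := summable_sq_fourierCoeff hg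
  have hinj1 : Function.Injective (fun l : ℤ => a - l) := fun x y h => by
    simp only at h; omega
  have hinj2 : Function.Injective (fun l : ℤ => l - b) := fun x y h => by
    simp only at h; omega
  have h1 : Summable fun l : ℤ => ‖fourierCoeff f (a - l)‖ ^ 2 :=
    (hf2.comp_injective hinj1).congr fun l => by simp [Function.comp]
  have h2 : Summable fun l : ℤ => ‖fourierCoeff g (l - b)‖ ^ 2 :=
    (hg2.comp_injective hinj2).congr fun l => by simp [Function.comp]
  refine Summable.of_nonneg_of_le (fun l => by positivity) (fun l => ?_)
    ((h1.add h2).div_const 2)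
  nlinarith [sq_nonneg (‖fourierCoeff f (a - l)‖ - ‖fourierCoeff g (l - b)‖)]

/-- entrywise form of Widom's identity, Lemma 2.1 of the paper: for
`f, g ∈ L²(𝕋)`, `n ≥ 1` and `0 ≤ j, k < n`, the `(j,k)` entry of
`Tₙ(fg) − Tₙ(f)·Tₙ(g)` equals
`∑_{m≥1} f̂(j+m)·ĝ(−m−k) + ∑_{m≥0} f̂(j−n−m)·ĝ(n+m−k)`,
both series converging absolutely. -/
theorem widom_identity_entrywise (f g : 𝕋 → ℂ)
    (hf : MemLp f 2 haarAddCircle) (hg : MemLp g 2 haarAddCircle)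
    (n : ℕ) (hn : 1 ≤ n) (j k : Fin n) :
    Summable (fun m : ℕ =>
      ‖fourierCoeff f (((j : ℕ) : ℤ) + (m : ℤ) + 1) *
        fourierCoeff g (-((m : ℤ) + 1) - ((k : ℕ) : ℤ))‖) ∧
    Summable (fun m : ℕ =>
      ‖fourierCoeff f (((j : ℕ) : ℤ) - (n : ℤ) - (m : ℤ)) *
        fourierCoeff g ((n : ℤ) + (m : ℤ) - ((k : ℕ) : ℤ))‖) ∧
    fourierCoeff (fun x => f x * g x) (((j : ℕ) : ℤ) - ((k : ℕ) : ℤ))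
        - ∑ l : Fin n, fourierCoeff f (((j : ℕ) : ℤ) - ((l : ℕ) : ℤ)) *
            fourierCoeff g (((l : ℕ) : ℤ) - ((k : ℕ) : ℤ))
      = (∑' m : ℕ, fourierCoeff f (((j : ℕ) : ℤ) + (m : ℤ) + 1) *
            fourierCoeff g (-((m : ℤ) + 1) - ((k : ℕ) : ℤ)))
        + ∑' m : ℕ, fourierCoeff f (((j : ℕ) : ℤ) - (n : ℤ) - (m : ℤ)) *
            fourierCoeff g ((n : ℤ) + (m : ℤ) - ((k : ℕ) : ℤ)) := by
  set a : ℤ → ℂ := fun l =>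
    fourierCoeff f (((j : ℕ) : ℤ) - l) * fourierCoeff g (l - ((k : ℕ) : ℤ)) with ha_def
  have hanorm : Summable fun l : ℤ => ‖a l‖ :=
    (summable_coeff_mul hf hg _ _).congr fun l => (norm_mul _ _).symm
  have hsumm : Summable a := hanorm.of_norm
  have inj1 : Function.Injective (fun m : ℕ => (-(m + 1) : ℤ)) := by
    intro x y h; simp only at h; omega
  have inj2 : Function.Injective (fun m : ℕ => ((m : ℤ) + n)) := by
    intro x y h; simp only at h; omega
  -- index identifications
  have id1 : ∀ m : ℕ, a (-((m : ℤ) + 1)) =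
      fourierCoeff f (((j : ℕ) : ℤ) + (m : ℤ) + 1) *
        fourierCoeff g (-((m : ℤ) + 1) - ((k : ℕ) : ℤ)) := by
    intro m
    simp only [ha_def]
    congr 2 <;> ring
  have id2 : ∀ m : ℕ, a ((m : ℤ) + n) =
      fourierCoeff f (((j : ℕ) : ℤ) - (n : ℤ) - (m : ℤ)) *
        fourierCoeff g ((n : ℤ) + (m : ℤ) - ((k : ℕ) : ℤ)) := by
    intro m
    simp only [ha_def]
    congr 2 <;> ring
  have S1 : Summable (fun m : ℕ =>
      ‖fourierCoeff f (((j : ℕ) : ℤ) + (m : ℤ) + 1) *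
        fourierCoeff g (-((m : ℤ) + 1) - ((k : ℕ) : ℤ))‖) := by
    refine (hanorm.comp_injective inj1).congr fun m => ?_
    simp only [Function.comp_apply]
    rw [id1 m]
  have S2 : Summable (fun m : ℕ =>
      ‖fourierCoeff f (((j : ℕ) : ℤ) - (n : ℤ) - (m : ℤ)) *
        fourierCoeff g ((n : ℤ) + (m : ℤ) - ((k : ℕ) : ℤ))‖) := by
    refine (hanorm.comp_injective inj2).congr fun m => ?_
    simp only [Function.comp_apply]
    rw [id2 m]
  refine ⟨S1, S2, ?_⟩
  -- the convolution identity
  have hconv : fourierCoeff (fun x => f x * g x) (((j : ℕ) : ℤ) - ((k : ℕ) : ℤ))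
      = ∑' l : ℤ, a l := by
    rw [fourierCoeff_mul hf hg]
    rw [← (Equiv.subRight ((j : ℕ) : ℤ)).tsum_eq
      (fun i : ℤ => fourierCoeff f (-i) * fourierCoeff g (i + (((j : ℕ) : ℤ) - ((k : ℕ) : ℤ))))]
    refine tsum_congr fun l => ?_
    simp only [Equiv.subRight_apply, ha_def]
    congr 2 <;> ring
  -- split ℤ into ℕ and negatives
  have hnat : Summable fun m : ℕ => a m := hsumm.comp_injective Nat.cast_injective
  have hneg : Summable fun m : ℕ => a (-((m : ℤ) + 1)) := hanorm.of_norm.comp_injective inj1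
  have split1 : ∑' l : ℤ, a l = (∑' m : ℕ, a m) + ∑' m : ℕ, a (-((m : ℤ) + 1)) :=
    tsum_of_nat_of_neg_add_one hnat hneg
  have split2 : ∑' m : ℕ, a m
      = (∑ i ∈ Finset.range n, a i) + ∑' m : ℕ, a ((m + n : ℕ)) :=
    (Summable.sum_add_tsum_nat_add n hnat).symm
  have hfin : ∑ l : Fin n, fourierCoeff f (((j : ℕ) : ℤ) - ((l : ℕ) : ℤ)) *
      fourierCoeff g (((l : ℕ) : ℤ) - ((k : ℕ) : ℤ)) = ∑ i ∈ Finset.range n, a i :=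
    Fin.sum_univ_eq_sum_range (fun i : ℕ => a i) n
  have T1 : ∑' m : ℕ, fourierCoeff f (((j : ℕ) : ℤ) + (m : ℤ) + 1) *
      fourierCoeff g (-((m : ℤ) + 1) - ((k : ℕ) : ℤ)) = ∑' m : ℕ, a (-((m : ℤ) + 1)) :=
    tsum_congr fun m => (id1 m).symm
  have T2 : ∑' m : ℕ, fourierCoeff f (((j : ℕ) : ℤ) - (n : ℤ) - (m : ℤ)) *
      fourierCoeff g ((n : ℤ) + (m : ℤ) - ((k : ℕ) : ℤ)) = ∑' m : ℕ, a ((m + n : ℕ)) := by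
    refine tsum_congr fun m => ?_
    rw [show (((m + n : ℕ) : ℤ)) = ((m : ℤ) + n) by push_cast; ring, id2 m]
  rw [hconv, hfin, split1, split2, T1, T2]
  ring
end
end

section
/- Let {A_n} and {B_n} be sequences of positive semidefinite Hermitian matrices, where A_n and B_n are n×n complex matrices. If {A_n + B_n} converges to the zero sequence in Type 1 strong cluster sense, then both {A_n} and {B_n} converge to the zero sequence in Type 1 strong cluster sense. -/
open MeasureTheory Matrix AddCircle
open scoped Real ComplexOrder

noncomputable section

namespace Aux

variable {n : ℕ}

lemma apply_eb {A : Matrix (Fin n) (Fin n) ℂ} (hA : A.IsHermitian) (j : Fin n) :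
    toEuclideanLin A (hA.eigenvectorBasis j) =
    (hA.eigenvalues j : ℂ) • hA.eigenvectorBasis j := by
  apply (WithLp.equiv 2 _).injective
  simp only [WithLp.equiv_apply, ofLp_toEuclideanLin_apply]
  ext i
  have := congrFun (hA.mulVec_eigenvectorBasis j) i
  simpa using this

lemma quad {A : Matrix (Fin n) (Fin n) ℂ} (hA : A.IsHermitian)
    (x : EuclideanSpace ℂ (Fin n)) :
    (inner ℂ x (toEuclideanLin A x) : ℂ).re =
      ∑ i, hA.eigenvalues i * ‖(inner ℂ (hA.eigenvectorBasis i) x : ℂ)‖ ^ 2 := by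
  have key : (inner ℂ x (toEuclideanLin A x) : ℂ) =
      ∑ i, (hA.eigenvalues i : ℂ) * (‖(inner ℂ (hA.eigenvectorBasis i) x : ℂ)‖ : ℂ) ^ 2 := by
    rw [← hA.eigenvectorBasis.sum_inner_mul_inner x (toEuclideanLin A x)]
    congr 1; ext i
    have hsym := (Matrix.isHermitian_iff_isSymmetric.1 hA)
    set c : ℂ := inner ℂ (hA.eigenvectorBasis i) x with hc
    have h1 : (inner ℂ (hA.eigenvectorBasis i) (toEuclideanLin A x) : ℂ)
        = (hA.eigenvalues i : ℂ) * c := by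
      rw [← hsym _ _, apply_eb hA i, inner_smul_left, Complex.conj_ofReal]
    have h2 : (inner ℂ x (hA.eigenvectorBasis i) : ℂ) = starRingEnd ℂ c :=
      (inner_conj_symm _ _).symm
    have h3 : (starRingEnd ℂ) c * c = (‖c‖ : ℂ) ^ 2 := by
      rw [← Complex.normSq_eq_conj_mul_self, Complex.normSq_eq_norm_sq]
      push_cast; ring
    rw [h1, h2, mul_comm ((starRingEnd ℂ) c), mul_assoc, mul_comm c, h3]
  have key2 : (inner ℂ x (toEuclideanLin A x) : ℂ) =
      ((∑ i, hA.eigenvalues i * ‖(inner ℂ (hA.eigenvectorBasis i) x : ℂ)‖ ^ 2 : ℝ) : ℂ) := by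
    rw [key]; push_cast; ring
  rw [key2, Complex.ofReal_re]

lemma parseval (b : OrthonormalBasis (Fin n) ℂ (EuclideanSpace ℂ (Fin n)))
    (x : EuclideanSpace ℂ (Fin n)) :
    ‖x‖ ^ 2 = ∑ i, ‖(inner ℂ (b i) x : ℂ)‖ ^ 2 := by
  have h1 : ‖x‖ = ‖b.repr x‖ := (b.repr.norm_map x).symm
  rw [h1, EuclideanSpace.norm_eq, Real.sq_sqrt (by positivity)]
  congr 1; ext i; rw [b.repr_apply_apply]

lemma inner_eq_zero_of_mem_span (b : OrthonormalBasis (Fin n) ℂ (EuclideanSpace ℂ (Fin n)))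
    {S : Set (Fin n)} {i : Fin n} (hi : i ∉ S) {x : EuclideanSpace ℂ (Fin n)}
    (hx : x ∈ Submodule.span ℂ (b '' S)) : (inner ℂ (b i) x : ℂ) = 0 := by
  induction hx using Submodule.span_induction with
  | mem y hy =>
    obtain ⟨j, hj, rfl⟩ := hy
    exact b.orthonormal.2 (fun h => hi (h ▸ hj))
  | zero => exact inner_zero_right _
  | add y z _ _ hy hz => rw [inner_add_right, hy, hz, add_zero]
  | smul c y _ hy => rw [inner_smul_right, hy, mul_zero]

lemma finrank_span_ob (b : OrthonormalBasis (Fin n) ℂ (EuclideanSpace ℂ (Fin n)))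
    (S : Set (Fin n)) :
    Module.finrank ℂ (Submodule.span ℂ (b '' S)) = S.ncard := by
  haveI : Fintype (b '' S) := Set.Finite.fintype (Set.toFinite _)
  have hli : LinearIndependent ℂ ((↑) : (b '' S) → EuclideanSpace ℂ (Fin n)) :=
    (b.orthonormal.linearIndependent.linearIndepOn_id).mono (Set.image_subset_range b S)
  rw [finrank_span_set_eq_card hli, ← Set.ncard_eq_toFinset_card',
    Set.ncard_image_of_injective _ b.orthonormal.linearIndependent.injective]

lemma count_le {ε : ℝ} (hε : 0 < ε) {A C : Matrix (Fin n) (Fin n) ℂ}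
    (hA : A.IsHermitian) (hC : C.IsHermitian) (hBC : (C - A).PosSemidef) :
    {i | ε ≤ hA.eigenvalues i}.ncard ≤ {i | ε ≤ hC.eigenvalues i}.ncard := by
  by_contra hlt
  push_neg at hlt
  set SA := {i | ε ≤ hA.eigenvalues i} with hSA
  set SC := {i | ε ≤ hC.eigenvalues i} with hSC
  set V := Submodule.span ℂ (hA.eigenvectorBasis '' SA) with hV
  set W := Submodule.span ℂ (hC.eigenvectorBasis '' SCᶜ) with hW
  have hdV : Module.finrank ℂ V = SA.ncard := finrank_span_ob _ _
  have hdW : Module.finrank ℂ W = SCᶜ.ncard := finrank_span_ob _ _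
  have hcompl : SCᶜ.ncard = n - SC.ncard := by
    have := Set.ncard_add_ncard_compl SC
    simp only [Set.ncard_univ, Nat.card_eq_fintype_card, Fintype.card_fin] at this
    omega
  have hSCn : SC.ncard ≤ n := by
    have := Set.ncard_le_ncard (Set.subset_univ SC) (Set.finite_univ)
    simpa [Set.ncard_univ] using this
  have hrank : Module.finrank ℂ (EuclideanSpace ℂ (Fin n)) = n := by simp
  have hsum := Submodule.finrank_sup_add_finrank_inf_eq V W
  have hle : Module.finrank ℂ ↥(V ⊔ W) ≤ n := by
    have := Submodule.finrank_le (V ⊔ W)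
    rwa [hrank] at this
  have hpos : 0 < Module.finrank ℂ ↥(V ⊓ W) := by omega
  haveI := Module.finrank_pos_iff.mp hpos
  obtain ⟨⟨x, hxVW⟩, hxne⟩ := exists_ne (0 : ↥(V ⊓ W))
  have hx0 : x ≠ 0 := by simpa [Submodule.mk_eq_zero] using hxne
  have hxV : x ∈ V := hxVW.1
  have hxW : x ∈ W := hxVW.2
  -- lower bound from V
  have hV' : ε * ‖x‖ ^ 2 ≤ (inner ℂ x (toEuclideanLin A x) : ℂ).re := by
    rw [quad hA x, parseval hA.eigenvectorBasis x, Finset.mul_sum]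
    apply Finset.sum_le_sum
    intro i _
    by_cases hi : i ∈ SA
    · exact mul_le_mul_of_nonneg_right hi (by positivity)
    · rw [inner_eq_zero_of_mem_span _ hi hxV]
      simp
  -- upper bound from W
  have hW' : (inner ℂ x (toEuclideanLin C x) : ℂ).re < ε * ‖x‖ ^ 2 := by
    rw [quad hC x, parseval hC.eigenvectorBasis x, Finset.mul_sum]
    have hxnorm : 0 < ‖x‖ ^ 2 := pow_pos (norm_pos_iff.2 hx0) 2
    have hex : ∃ i, (inner ℂ (hC.eigenvectorBasis i) x : ℂ) ≠ 0 := by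
      by_contra hall
      push_neg at hall
      have : ‖x‖ ^ 2 = 0 := by
        rw [parseval hC.eigenvectorBasis x]
        apply Finset.sum_eq_zero
        intro i _; rw [hall i]; simp
      exact (pow_pos (norm_pos_iff.2 hx0) 2).ne' this
    obtain ⟨i₀, hi₀⟩ := hex
    have hi₀SC : i₀ ∉ SC := fun hmem =>
      hi₀ (inner_eq_zero_of_mem_span _ (by simpa using hmem) hxW)
    apply Finset.sum_lt_sum
    · intro i _
      by_cases hi : i ∈ SC
      · rw [inner_eq_zero_of_mem_span _ (by simpa using hi) hxW]; simp
      · have : hC.eigenvalues i < ε := not_le.mp hi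
        exact mul_le_mul_of_nonneg_right this.le (by positivity)
    · refine ⟨i₀, Finset.mem_univ _, ?_⟩
      have h1 : hC.eigenvalues i₀ < ε := not_le.mp hi₀SC
      have h2 : 0 < ‖(inner ℂ (hC.eigenvectorBasis i₀) x : ℂ)‖ ^ 2 := pow_pos (norm_pos_iff.2 hi₀) 2
      exact mul_lt_mul_of_pos_right h1 h2
  -- monotonicity
  have hmono : (inner ℂ x (toEuclideanLin A x) : ℂ).re ≤ (inner ℂ x (toEuclideanLin C x) : ℂ).re := by
    have hpsd : 0 ≤ (inner ℂ x (toEuclideanLin (C - A) x) : ℂ) := by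
      rw [toEuclideanLin_apply, EuclideanSpace.inner_eq_star_dotProduct]
      rw [dotProduct_comm]
      exact hBC.dotProduct_mulVec_nonneg _
    have hre : 0 ≤ (inner ℂ x (toEuclideanLin (C - A) x) : ℂ).re := by
      exact_mod_cast (Complex.le_def.mp hpsd).1
    have heq : (inner ℂ x (toEuclideanLin (C - A) x) : ℂ)
        = (inner ℂ x (toEuclideanLin C x) : ℂ) - (inner ℂ x (toEuclideanLin A x) : ℂ) := by
      rw [map_sub]
      simp [inner_sub_right]
    rw [heq, Complex.sub_re] at hre
    linarith
  linarith


lemma t1_congr {A A' : ∀ n : ℕ, Matrix (Fin n) (Fin n) ℂ}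
    (hAA : A = A') (hA : ∀ n, (A n).IsHermitian) (hA' : ∀ n, (A' n).IsHermitian) :
    Type1StrongCluster A hA → Type1StrongCluster A' hA' := by
  subst hAA; exact fun h => h

lemma key_half (M N : ∀ n : ℕ, Matrix (Fin n) (Fin n) ℂ)
    (hM : ∀ n, (M n).PosSemidef) (hN : ∀ n, (N n).PosSemidef)
    (h : Type1StrongCluster (fun n => M n + N n)
      (fun n => (hM n).isHermitian.add (hN n).isHermitian)) :
    Type1StrongCluster M (fun n => (hM n).isHermitian) := by
  intro ε hε
  obtain ⟨N₁, N₂, hh⟩ := h ε hε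
  refine ⟨N₁, N₂, fun n hn => ?_⟩
  have h1 : {i : Fin n | ε ≤ |(hM n).isHermitian.eigenvalues i|}
      = {i : Fin n | ε ≤ (hM n).isHermitian.eigenvalues i} := by
    ext i; simp [abs_of_nonneg ((hM n).eigenvalues_nonneg i)]
  have h2 : {i : Fin n | ε ≤ |((hM n).isHermitian.add (hN n).isHermitian).eigenvalues i|}
      = {i : Fin n | ε ≤ ((hM n).isHermitian.add (hN n).isHermitian).eigenvalues i} := by
    ext i; simp [abs_of_nonneg (((hM n).add (hN n)).eigenvalues_nonneg i)]
  rw [h1]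
  calc {i : Fin n | ε ≤ (hM n).isHermitian.eigenvalues i}.ncard
      ≤ {i : Fin n | ε ≤ ((hM n).isHermitian.add (hN n).isHermitian).eigenvalues i}.ncard :=
        count_le hε (hM n).isHermitian ((hM n).isHermitian.add (hN n).isHermitian)
          (by simpa [add_sub_cancel_left] using hN n)
    _ ≤ N₁ := by rw [← h2]; exact hh n hn

end Aux

/-- Lemma 2.3 of the paper: if `{Aₙ}` and `{Bₙ}` are sequences of
positive semidefinite matrices and `{Aₙ + Bₙ}` converges to the zero sequence in
Type 1 strong cluster sense, then so do `{Aₙ}` and `{Bₙ}`. -/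
theorem type1StrongCluster_of_add_posSemidef
    (A B : ∀ n : ℕ, Matrix (Fin n) (Fin n) ℂ)
    (hA : ∀ n, (A n).PosSemidef) (hB : ∀ n, (B n).PosSemidef)
    (h : Type1StrongCluster (fun n => A n + B n)
      (fun n => (hA n).isHermitian.add (hB n).isHermitian)) :
    Type1StrongCluster A (fun n => (hA n).isHermitian) ∧
      Type1StrongCluster B (fun n => (hB n).isHermitian) := by
  constructor
  · exact Aux.key_half A B hA hB h
  · refine Aux.key_half B A hB hA ?_
    refine Aux.t1_congr (funext fun n => add_comm (A n) (B n)) _ _ h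
end
end

section
/- Let H be a complex Hilbert space with a Hilbert basis e : ℕ → H, let K : H →L[ℂ] H be a bounded linear operator, and for each n let A_n ∈ Matrix (Fin n) (Fin n) ℂ be the finite section of K, with (i,j) entry ⟨K e_j, e_i⟩. Then K is a compact operator if and only if {A_n} converges to the zero sequence in Type 2 strong cluster sense. -/
open MeasureTheory Matrix AddCircle
open scoped Real ComplexOrder

noncomputable section

namespace FSAux

variable {H : Type*} [NormedAddCommGroup H] [InnerProductSpace ℂ H]

local notation "⟪" x ", " y "⟫" => (inner ℂ x y : ℂ)

/-- The coordinate map `x ↦ (⟪e i, x⟫)_{i < n}` as a linear map. -/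
noncomputable def coordAux (e : HilbertBasis ℕ ℂ H) (n : ℕ) : H →ₗ[ℂ] EuclideanSpace ℂ (Fin n) where
  toFun x := (WithLp.equiv 2 (Fin n → ℂ)).symm fun i => ⟪e (i : ℕ), x⟫
  map_add' x y := by
    ext i
    simp [WithLp.equiv_symm_apply, inner_add_right]
  map_smul' c x := by
    ext i
    simp [WithLp.equiv_symm_apply, inner_smul_right]

lemma coordAux_apply (e : HilbertBasis ℕ ℂ H) (n : ℕ) (x : H) (i : Fin n) :
    coordAux e n x i = ⟪e (i : ℕ), x⟫ := rfl

lemma norm_coordAux_le (e : HilbertBasis ℕ ℂ H) (n : ℕ) (x : H) :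
    ‖coordAux e n x‖ ≤ ‖x‖ := by
  rw [EuclideanSpace.norm_eq]
  have h1 : ∑ i : Fin n, ‖coordAux e n x i‖ ^ 2
      = ∑ i ∈ Finset.range n, ‖⟪e i, x⟫‖ ^ 2 :=
    Fin.sum_univ_eq_sum_range (fun i => ‖⟪e i, x⟫‖ ^ 2) n
  have h2 := e.orthonormal.sum_inner_products_le (s := Finset.range n) x
  rw [h1]
  calc Real.sqrt (∑ i ∈ Finset.range n, ‖⟪e i, x⟫‖ ^ 2)
      ≤ Real.sqrt (‖x‖ ^ 2) := Real.sqrt_le_sqrt h2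
    _ = ‖x‖ := Real.sqrt_sq (norm_nonneg x)

/-- The coordinate map as a continuous linear map. -/
noncomputable def coordL (e : HilbertBasis ℕ ℂ H) (n : ℕ) : H →L[ℂ] EuclideanSpace ℂ (Fin n) :=
  (coordAux e n).mkContinuous 1 fun x => by
    simpa using norm_coordAux_le e n x

lemma coordL_apply (e : HilbertBasis ℕ ℂ H) (n : ℕ) (x : H) (i : Fin n) :
    coordL e n x i = ⟪e (i : ℕ), x⟫ := rfl

lemma norm_coordL_apply_le (e : HilbertBasis ℕ ℂ H) (n : ℕ) (x : H) :
    ‖coordL e n x‖ ≤ ‖x‖ := norm_coordAux_le e n x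

/-- The synthesis map `v ↦ ∑ v i • e i`. -/
noncomputable def synthL (e : HilbertBasis ℕ ℂ H) (n : ℕ) : EuclideanSpace ℂ (Fin n) →L[ℂ] H :=
  LinearMap.toContinuousLinearMap
    { toFun := fun v => ∑ i : Fin n, v i • e (i : ℕ)
      map_add' := fun v w => by
        simp [add_smul, Finset.sum_add_distrib]
      map_smul' := fun c v => by
        simp [smul_smul, Finset.smul_sum] }

lemma synthL_apply (e : HilbertBasis ℕ ℂ H) (n : ℕ) (v : EuclideanSpace ℂ (Fin n)) :
    synthL e n v = ∑ i : Fin n, v i • e (i : ℕ) := rfl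

lemma inner_e_eq (e : HilbertBasis ℕ ℂ H) {n : ℕ} (i j : Fin n) :
    ⟪e (i : ℕ), e (j : ℕ)⟫ = if i = j then 1 else 0 := by
  rw [orthonormal_iff_ite.mp e.orthonormal]
  simp [Fin.val_inj]

lemma coordL_synthL (e : HilbertBasis ℕ ℂ H) (n : ℕ) (v : EuclideanSpace ℂ (Fin n)) :
    coordL e n (synthL e n v) = v := by
  ext i
  rw [coordL_apply, synthL_apply, inner_sum]
  simp only [inner_smul_right, inner_e_eq]
  simp

lemma norm_synthL_apply (e : HilbertBasis ℕ ℂ H) (n : ℕ) (v : EuclideanSpace ℂ (Fin n)) :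
    ‖synthL e n v‖ = ‖v‖ := by
  have h : ⟪synthL e n v, synthL e n v⟫ = ∑ i : Fin n, ((‖v i‖ : ℝ) : ℂ) ^ 2 := by
    rw [synthL_apply, sum_inner]
    simp only [inner_smul_left, inner_sum, inner_smul_right, inner_e_eq, mul_ite, mul_one,
      mul_zero]
    refine Finset.sum_congr rfl fun i _ => ?_
    rw [Finset.sum_ite_eq, if_pos (Finset.mem_univ i), mul_comm (v i), RCLike.conj_mul]
    norm_cast
  have h' : ⟪synthL e n v, synthL e n v⟫ = ((∑ i : Fin n, ‖v i‖ ^ 2 : ℝ) : ℂ) := by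
    rw [h]; push_cast; ring
  have h2 : ‖synthL e n v‖ ^ 2 = ‖v‖ ^ 2 := by
    rw [← inner_self_eq_norm_sq (𝕜 := ℂ), h', EuclideanSpace.norm_eq,
      Real.sq_sqrt (by positivity)]
    simp [← Complex.ofReal_pow]
  have := norm_nonneg (synthL e n v); have := norm_nonneg v
  nlinarith

end FSAux

namespace Chunk2
variable {H : Type*} [NormedAddCommGroup H] [InnerProductSpace ℂ H]
open FSAux
local notation "⟪" x ", " y "⟫" => (inner ℂ x y : ℂ)

/-- Projection onto the span of the first `n` basis vectors. -/
noncomputable def projP (e : HilbertBasis ℕ ℂ H) (n : ℕ) : H →L[ℂ] H :=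
  synthL e n ∘L coordL e n

lemma projP_apply (e : HilbertBasis ℕ ℂ H) (n : ℕ) (x : H) :
    projP e n x = synthL e n (coordL e n x) := rfl

lemma norm_projP_apply_le (e : HilbertBasis ℕ ℂ H) (n : ℕ) (x : H) :
    ‖projP e n x‖ ≤ ‖x‖ := by
  rw [projP_apply, norm_synthL_apply]
  exact norm_coordL_apply_le e n x

lemma coordL_projP (e : HilbertBasis ℕ ℂ H) (n : ℕ) (x : H) :
    coordL e n (projP e n x) = coordL e n x := coordL_synthL e n _

lemma inner_projP_sub (e : HilbertBasis ℕ ℂ H) (n : ℕ) (x : H) :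
    ⟪projP e n x, x - projP e n x⟫ = 0 := by
  have he : ∀ i : Fin n, ⟪e (i : ℕ), x - projP e n x⟫ = 0 := by
    intro i
    have h1 : ⟪e (i : ℕ), projP e n x⟫ = coordL e n (projP e n x) i := rfl
    rw [inner_sub_right, h1, coordL_projP]
    simp [coordL_apply]
  rw [projP_apply, synthL_apply, sum_inner]
  refine Finset.sum_eq_zero fun i _ => ?_
  rw [inner_smul_left]
  have h' : (inner ℂ (e (i : ℕ))
      (x - ∑ j : Fin n, coordL e n x j • e (j : ℕ)) : ℂ) = 0 := he i
  rw [h', mul_zero]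

lemma norm_sub_projP_le (e : HilbertBasis ℕ ℂ H) (n : ℕ) (x : H) :
    ‖x - projP e n x‖ ≤ ‖x‖ := by
  have h0 : projP e n x + (x - projP e n x) = x := by abel
  have h := norm_add_sq (𝕜 := ℂ) (projP e n x) (x - projP e n x)
  rw [h0, inner_projP_sub] at h
  simp only [_root_.map_zero, mul_zero, add_zero] at h
  nlinarith [norm_nonneg (x - projP e n x), norm_nonneg x, norm_nonneg (projP e n x)]

lemma projP_eq_sum_range (e : HilbertBasis ℕ ℂ H) (n : ℕ) (x : H) :
    projP e n x = ∑ i ∈ Finset.range n, e.repr x i • e i := by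
  rw [projP_apply, synthL_apply, ← Fin.sum_univ_eq_sum_range (fun i => e.repr x i • e i) n]
  refine Finset.sum_congr rfl fun i _ => ?_
  rw [coordL_apply, e.repr_apply_apply]

lemma tendsto_sub_projP (e : HilbertBasis ℕ ℂ H) (x : H) :
    Filter.Tendsto (fun n => x - projP e n x) Filter.atTop (nhds 0) := by
  have hs := (e.hasSum_repr x).tendsto_sum_nat
  have h2 : Filter.Tendsto (fun n => x - ∑ i ∈ Finset.range n, e.repr x i • e i)
      Filter.atTop (nhds (x - x)) := Filter.Tendsto.sub tendsto_const_nhds hs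
  simpa [projP_eq_sum_range] using h2

/-- The finite section matrix of an operator. -/
noncomputable def secMat (e : HilbertBasis ℕ ℂ H) (T : H →L[ℂ] H) (n : ℕ) :
    Matrix (Fin n) (Fin n) ℂ :=
  Matrix.of fun i j : Fin n => ⟪e (i : ℕ), T (e (j : ℕ))⟫

lemma secMat_apply (e : HilbertBasis ℕ ℂ H) (T : H →L[ℂ] H) (n : ℕ) (i j : Fin n) :
    secMat e T n i j = ⟪e (i : ℕ), T (e (j : ℕ))⟫ := rfl

lemma toEuclideanCLM_secMat (e : HilbertBasis ℕ ℂ H) (T : H →L[ℂ] H) (n : ℕ) :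
    Matrix.toEuclideanCLM (𝕜 := ℂ) (secMat e T n) = coordL e n ∘L T ∘L synthL e n := by
  refine ContinuousLinearMap.ext fun v => ?_
  ext i
  have h1 : (Matrix.toEuclideanCLM (𝕜 := ℂ) (secMat e T n) v) i
      = ∑ j : Fin n, secMat e T n i j * v j := by
    have := Matrix.ofLp_toEuclideanCLM (secMat e T n) v
    have h2 := congrFun this i
    simpa [Matrix.mulVec, dotProduct] using h2
  rw [h1]
  have h3 : (coordL e n ∘L T ∘L synthL e n) v i = ⟪e (i : ℕ), T (synthL e n v)⟫ := rfl
  rw [h3, synthL_apply, _root_.map_sum, inner_sum]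
  exact Finset.sum_congr rfl fun j _ => by rw [_root_.map_smul, inner_smul_right, secMat_apply, mul_comm]

lemma norm_toEuclideanCLM_secMat_le (e : HilbertBasis ℕ ℂ H) (T : H →L[ℂ] H) (n : ℕ) :
    ‖Matrix.toEuclideanCLM (𝕜 := ℂ) (secMat e T n)‖ ≤ ‖T‖ := by
  rw [toEuclideanCLM_secMat]
  refine ContinuousLinearMap.opNorm_le_bound _ (norm_nonneg T) fun v => ?_
  have h1 : (coordL e n ∘L T ∘L synthL e n) v = coordL e n (T (synthL e n v)) := rfl
  rw [h1]
  calc ‖coordL e n (T (synthL e n v))‖ ≤ ‖T (synthL e n v)‖ := norm_coordL_apply_le e n _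
    _ ≤ ‖T‖ * ‖synthL e n v‖ := T.le_opNorm _
    _ = ‖T‖ * ‖v‖ := by rw [norm_synthL_apply]

lemma secMat_add (e : HilbertBasis ℕ ℂ H) (T S : H →L[ℂ] H) (n : ℕ) :
    secMat e (T + S) n = secMat e T n + secMat e S n := by
  ext i j
  simp [secMat_apply, Matrix.add_apply, inner_add_right]

lemma rank_secMat_projP_comp_le (e : HilbertBasis ℕ ℂ H) (T : H →L[ℂ] H) (m n : ℕ) :
    Matrix.rank (secMat e (projP e m ∘L T) n) ≤ m := by
  set B : Matrix (Fin n) (Fin m) ℂ := Matrix.of fun i k => ⟪e (i : ℕ), e (k : ℕ)⟫ with hB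
  set C : Matrix (Fin m) (Fin n) ℂ := Matrix.of fun k j => ⟪e (k : ℕ), T (e (j : ℕ))⟫ with hC
  have hfac : secMat e (projP e m ∘L T) n = B * C := by
    ext i j
    rw [Matrix.mul_apply, secMat_apply]
    have h1 : (projP e m ∘L T) (e (j : ℕ)) = ∑ k : Fin m, (coordL e m (T (e (j:ℕ)))) k • e (k : ℕ) := rfl
    rw [h1, inner_sum]
    refine Finset.sum_congr rfl fun k _ => ?_
    rw [inner_smul_right, coordL_apply, hB, hC]
    simp [mul_comm]
  calc Matrix.rank (secMat e (projP e m ∘L T) n) = Matrix.rank (B * C) := by rw [hfac]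
    _ ≤ Matrix.rank C := Matrix.rank_mul_le_right B C
    _ ≤ Fintype.card (Fin m) := Matrix.rank_le_card_height C
    _ = m := Fintype.card_fin m

end Chunk2

namespace Chunk3
variable {H : Type*} [NormedAddCommGroup H] [InnerProductSpace ℂ H]

/-- Uniform smallness on compact sets for an equibounded, pointwise-null family. -/
lemma exists_forall_norm_lt (T : ℕ → H →L[ℂ] H) (C : ℝ) (hC : ∀ n, ‖T n‖ ≤ C)
    (h0 : ∀ x : H, Filter.Tendsto (fun n => T n x) Filter.atTop (nhds 0))
    {S : Set H} (hS : IsCompact S) {ε : ℝ} (hε : 0 < ε) :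
    ∃ N : ℕ, ∀ n ≥ N, ∀ x ∈ S, ‖T n x‖ < ε := by
  have hC0 : 0 ≤ max C 0 := le_max_right _ _
  set δ : ℝ := ε / (2 * (max C 0 + 1)) with hδ
  have hδpos : 0 < δ := by positivity
  obtain ⟨t, htfin, htsub⟩ := (Metric.totallyBounded_iff.mp hS.totallyBounded) δ hδpos
  have hev : ∀ᶠ n in Filter.atTop, ∀ y ∈ t, ‖T n y‖ < ε / 2 := by
    rw [htfin.eventually_all]
    intro y _
    have := (h0 y).norm
    simp only [norm_zero] at this
    exact this.eventually_lt_const (by positivity)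
  obtain ⟨N, hN⟩ := Filter.eventually_atTop.mp hev
  refine ⟨N, fun n hn x hx => ?_⟩
  obtain ⟨y, hyt, hxy⟩ := Set.mem_iUnion₂.mp (htsub hx)
  have hxy' : ‖x - y‖ < δ := by
    rw [← dist_eq_norm]; exact Metric.mem_ball.mp hxy
  have h1 : ‖T n x‖ ≤ ‖T n y‖ + ‖T n (x - y)‖ := by
    calc ‖T n x‖ = ‖T n y + T n (x - y)‖ := by
          rw [← _root_.map_add, add_sub_cancel]
      _ ≤ ‖T n y‖ + ‖T n (x - y)‖ := norm_add_le _ _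
  have h2 : ‖T n (x - y)‖ ≤ max C 0 * δ := by
    calc ‖T n (x - y)‖ ≤ ‖T n‖ * ‖x - y‖ := (T n).le_opNorm _
      _ ≤ max C 0 * δ := by
          apply mul_le_mul ((hC n).trans (le_max_left _ _)) hxy'.le (norm_nonneg _) hC0
  have h3 : max C 0 * δ < ε / 2 := by
    rw [hδ, mul_div_assoc']
    rw [div_lt_div_iff₀ (by positivity) (by norm_num : (0:ℝ) < 2)]
    nlinarith
  have h4 := hN n hn y hyt
  linarith

/-- An operator with finite-dimensional range is compact. -/
lemma isCompactOperator_of_finiteRank {F : H →L[ℂ] H} (W : Submodule ℂ H)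
    [FiniteDimensional ℂ W] (hW : LinearMap.range (F : H →ₗ[ℂ] H) ≤ W) :
    IsCompactOperator ⇑F := by
  rw [isCompactOperator_iff_exists_mem_nhds_image_subset_compact]
  refine ⟨Metric.closedBall 0 1, Metric.closedBall_mem_nhds 0 one_pos,
    W.subtypeL '' Metric.closedBall 0 (‖F‖ + 1), ?_, ?_⟩
  · exact ((ProperSpace.isCompact_closedBall _ _).image W.subtypeL.continuous)
  · rintro y ⟨x, hx, rfl⟩
    have hFx : F x ∈ W := hW ⟨x, rfl⟩
    refine ⟨⟨F x, hFx⟩, ?_, rfl⟩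
    rw [Metric.mem_closedBall, dist_zero_right]
    have : ‖(⟨F x, hFx⟩ : W)‖ = ‖F x‖ := rfl
    rw [this]
    have hx1 : ‖x‖ ≤ 1 := by
      rw [Metric.mem_closedBall, dist_zero_right] at hx; exact hx
    calc ‖F x‖ ≤ ‖F‖ * ‖x‖ := F.le_opNorm x
      _ ≤ ‖F‖ * 1 := by nlinarith [norm_nonneg F]
      _ ≤ ‖F‖ + 1 := by nlinarith [norm_nonneg F]

lemma completeSpace_of_hilbertBasis (e : HilbertBasis ℕ ℂ H) : CompleteSpace H :=
  (e.repr.symm.isometry.isUniformInducing.completeSpace_congr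
    e.repr.symm.surjective).mp inferInstance

end Chunk3

namespace Chunk4
variable {H : Type*} [NormedAddCommGroup H] [InnerProductSpace ℂ H] [CompleteSpace H]
open ContinuousLinearMap
local notation "⟪" x ", " y "⟫" => (inner ℂ x y : ℂ)

lemma re_inner_le_of_le {B₁ B₂ : H →L[ℂ] H} (h : B₁ ≤ B₂) (x : H) :
    RCLike.re ⟪B₁ x, x⟫ ≤ RCLike.re ⟪B₂ x, x⟫ := by
  have hp := (ContinuousLinearMap.le_def B₁ B₂).mp h
  have h2 := hp.inner_nonneg_left x
  rw [ContinuousLinearMap.sub_apply, inner_sub_left] at h2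
  replace h2 := (RCLike.nonneg_iff.mp h2).1
  rw [_root_.map_sub] at h2
  linarith

lemma re_inner_smul_one (c : ℝ) (x : H) :
    RCLike.re ⟪(c • (1 : H →L[ℂ] H)) x, x⟫ = c * ‖x‖ ^ 2 := by
  rw [ContinuousLinearMap.smul_apply, ContinuousLinearMap.one_apply,
    RCLike.real_smul_eq_coe_smul (K := ℂ), inner_smul_left, RCLike.conj_ofReal,
    RCLike.re_ofReal_mul, inner_self_eq_norm_sq]

lemma exists_finiteRank_approx (K : H →L[ℂ] H) (N : ℕ) {ε : ℝ} (hε : 0 < ε)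
    (hyp : ∀ V : Submodule ℂ H, FiniteDimensional ℂ V → Module.finrank ℂ V = N + 1 →
      ∃ x : H, x ∈ V ∧ ‖x‖ = 1 ∧ ‖K x‖ ≤ ε) :
    ∃ F : H →L[ℂ] H, IsCompactOperator ⇑F ∧ ‖K - F‖ ≤ 2 * ε := by
  classical
  set A : H →L[ℂ] H := adjoint K * K with hA
  have hsa : IsSelfAdjoint A := by
    rw [hA, ← star_eq_adjoint]; exact IsSelfAdjoint.star_mul_self K
  set g : ℝ → ℝ := fun t => min 1 (max 0 ((t - 2 * ε ^ 2) / (2 * ε ^ 2))) with hgdef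
  have hgc : Continuous g := by
    apply Continuous.min continuous_const
    exact Continuous.max continuous_const (by fun_prop)
  have hg0 : ∀ t, 0 ≤ g t := fun t => le_min zero_le_one (le_max_left _ _)
  have hg1 : ∀ t, g t ≤ 1 := fun t => min_le_left _ _
  have hgsupp : ∀ t, t ≤ 2 * ε ^ 2 → g t = 0 := by
    intro t ht
    have h1 : (t - 2 * ε ^ 2) / (2 * ε ^ 2) ≤ 0 :=
      div_nonpos_iff.mpr (Or.inr ⟨by linarith, by positivity⟩)
    rw [hgdef]
    simp only [max_eq_left h1, min_eq_right zero_le_one]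
  have hgone : ∀ t, 4 * ε ^ 2 ≤ t → g t = 1 := by
    intro t ht
    have h1 : (1 : ℝ) ≤ (t - 2 * ε ^ 2) / (2 * ε ^ 2) := by
      rw [le_div_iff₀ (by positivity)]; linarith
    rw [hgdef]
    simp only [max_eq_right (le_trans zero_le_one h1), min_eq_left h1]
  have fact1 : ∀ t, 2 * ε ^ 2 * (g t * g t) ≤ g t * (t * g t) := by
    intro t
    rcases le_or_gt t (2 * ε ^ 2) with ht | ht
    · rw [hgsupp t ht]; simp
    · nlinarith [hg0 t, sq_nonneg (g t)]
  have fact2 : ∀ t, (1 - g t) * (t * (1 - g t)) ≤ 4 * ε ^ 2 := by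
    intro t
    rcases le_or_gt t (4 * ε ^ 2) with ht | ht
    · have h1 : 0 ≤ 1 - g t := by linarith [hg1 t]
      have h2 : (1 - g t) * (t * (1 - g t)) = (1 - g t) ^ 2 * t := by ring
      rw [h2]
      calc (1 - g t) ^ 2 * t ≤ (1 - g t) ^ 2 * (4 * ε ^ 2) :=
            mul_le_mul_of_nonneg_left ht (sq_nonneg _)
        _ ≤ 1 * (4 * ε ^ 2) := by
            apply mul_le_mul_of_nonneg_right _ (by positivity)
            nlinarith [hg0 t]
        _ = 4 * ε ^ 2 := one_mul _
    · rw [hgone t ht.le]; simp; positivity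
  set Q : H →L[ℂ] H := cfc g A with hQdef
  have hQsa : IsSelfAdjoint Q := cfc_predicate g A
  have hQsymm := hQsa.isSymmetric
  have hKnorm : ∀ y : H, ‖K y‖ ^ 2 = RCLike.re ⟪A y, y⟫ := by
    intro y
    have h1 : ⟪A y, y⟫ = ⟪K y, K y⟫ := by
      rw [hA, ContinuousLinearMap.mul_apply]
      exact adjoint_inner_left K y (K y)
    rw [h1, inner_self_eq_norm_sq]
  have e1 : (1 : H →L[ℂ] H) - Q = cfc (fun t : ℝ => 1 - g t) A := by
    rw [cfc_sub _ _ A (by fun_prop) (by fun_prop), cfc_const 1 A hsa, _root_.map_one]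
  -- upper bound
  have hcfc_ub : (1 - Q) * A * (1 - Q) = cfc (fun t => (1 - g t) * (t * (1 - g t))) A := by
    have e2 : cfc (fun t => (1 - g t) * (t * (1 - g t))) A
        = (1 - Q) * (A * (1 - Q)) := by
      rw [cfc_mul _ _ A (by fun_prop) (by fun_prop), cfc_mul _ _ A (by fun_prop) (by fun_prop),
        cfc_id' ℝ A, ← e1]
    rw [e2, mul_assoc]
  have hub : (1 - Q) * A * (1 - Q) ≤ (4 * ε ^ 2) • (1 : H →L[ℂ] H) := by
    rw [hcfc_ub, ← Algebra.algebraMap_eq_smul_one, ← cfc_const (4 * ε ^ 2) A hsa]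
    exact cfc_mono (fun t _ => fact2 t) (by fun_prop) (by fun_prop)
  have hFbound : ∀ x, ‖(K - K * Q) x‖ ≤ 2 * ε * ‖x‖ := by
    intro x
    have h1 : K - K * Q = K * (1 - Q) := by rw [mul_sub, mul_one]
    have h2 : ‖(K - K * Q) x‖ ^ 2 = RCLike.re ⟪A ((1 - Q) x), (1 - Q) x⟫ := by
      rw [h1, ContinuousLinearMap.mul_apply]; exact hKnorm ((1 - Q) x)
    have hsymm1 : LinearMap.IsSymmetric ((1 - Q : H →L[ℂ] H) : H →ₗ[ℂ] H) :=
      ((IsSelfAdjoint.one (R := H →L[ℂ] H)).sub hQsa).isSymmetric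
    have h3 : ⟪A ((1 - Q) x), (1 - Q) x⟫ = ⟪((1 - Q) * A * (1 - Q)) x, x⟫ := by
      rw [ContinuousLinearMap.mul_apply, ContinuousLinearMap.mul_apply]
      exact (hsymm1 (A ((1 - Q) x)) x).symm
    have h4 : RCLike.re ⟪((1 - Q) * A * (1 - Q)) x, x⟫ ≤ 4 * ε ^ 2 * ‖x‖ ^ 2 := by
      have := re_inner_le_of_le hub x
      rwa [re_inner_smul_one] at this
    have h5 : ‖(K - K * Q) x‖ ^ 2 ≤ (2 * ε * ‖x‖) ^ 2 := by
      rw [h2, h3]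
      calc RCLike.re ⟪((1 - Q) * A * (1 - Q)) x, x⟫ ≤ 4 * ε ^ 2 * ‖x‖ ^ 2 := h4
        _ = (2 * ε * ‖x‖) ^ 2 := by ring
    have hn1 : (0:ℝ) ≤ ‖(K - K * Q) x‖ := norm_nonneg _
    have hn2 : (0:ℝ) ≤ 2 * ε * ‖x‖ := by positivity
    nlinarith
  have hKF : ‖K - K * Q‖ ≤ 2 * ε :=
    opNorm_le_bound _ (by positivity) hFbound
  -- lower bound on the range of Q
  have hcfc_lb : Q * A * Q = cfc (fun t => g t * (t * g t)) A := by
    have e2 : cfc (fun t => g t * (t * g t)) A = Q * (A * Q) := by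
      rw [cfc_mul _ _ A (by fun_prop) (by fun_prop), cfc_mul _ _ A (by fun_prop) (by fun_prop),
        cfc_id' ℝ A]
    rw [e2, mul_assoc]
  have hQQ : (2 * ε ^ 2 : ℝ) • (Q * Q) ≤ Q * A * Q := by
    have h6 : cfc (fun t => (2 * ε ^ 2 : ℝ) * (g t * g t)) A = (2 * ε ^ 2 : ℝ) • (Q * Q) := by
      have hfun : (fun t => (2 * ε ^ 2 : ℝ) * (g t * g t))
          = fun t => (2 * ε ^ 2 : ℝ) • (g t * g t) := by
        funext t; rw [smul_eq_mul]
      rw [hfun, cfc_smul _ _ A (by fun_prop), cfc_mul _ _ A (by fun_prop) (by fun_prop)]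
    rw [hcfc_lb, ← h6]
    exact cfc_mono (fun t _ => fact1 t) (by fun_prop) (by fun_prop)
  have hlow : ∀ y : H, 2 * ε ^ 2 * ‖Q y‖ ^ 2 ≤ ‖K (Q y)‖ ^ 2 := by
    intro y
    have h2 : ‖K (Q y)‖ ^ 2 = RCLike.re ⟪A (Q y), Q y⟫ := hKnorm _
    have h3 : ⟪A (Q y), Q y⟫ = ⟪(Q * A * Q) y, y⟫ := by
      rw [ContinuousLinearMap.mul_apply, ContinuousLinearMap.mul_apply]
      exact (hQsymm (A (Q y)) y).symm
    have h4 : RCLike.re ⟪((2 * ε ^ 2 : ℝ) • (Q * Q)) y, y⟫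
        ≤ RCLike.re ⟪(Q * A * Q) y, y⟫ := re_inner_le_of_le hQQ y
    have h5 : RCLike.re ⟪((2 * ε ^ 2 : ℝ) • (Q * Q)) y, y⟫ = 2 * ε ^ 2 * ‖Q y‖ ^ 2 := by
      rw [ContinuousLinearMap.smul_apply, RCLike.real_smul_eq_coe_smul (K := ℂ),
        inner_smul_left, RCLike.conj_ofReal, RCLike.re_ofReal_mul,
        ContinuousLinearMap.mul_apply]
      congr 1
      exact (congrArg RCLike.re (hQsymm (Q y) y)).trans (inner_self_eq_norm_sq _)
    rw [h2, h3]
    rw [h5] at h4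
    exact h4
  -- the range of Q is finite dimensional
  have hWfd : FiniteDimensional ℂ (LinearMap.range ((Q : H →ₗ[ℂ] H))) := by
    by_contra hfd
    have hrank : ((N + 1 : ℕ) : Cardinal) ≤ Module.rank ℂ (LinearMap.range ((Q : H →ₗ[ℂ] H))) := by
      have h7 : ¬ Module.rank ℂ (LinearMap.range ((Q : H →ₗ[ℂ] H))) < Cardinal.aleph0 := by
        intro hlt
        exact hfd (Module.rank_lt_aleph0_iff.mp hlt)
      exact le_trans (Cardinal.nat_lt_aleph0 (N + 1)).le (not_lt.mp h7)
    obtain ⟨f, hf⟩ := exists_linearIndependent_of_le_rank hrank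
    have hg' : LinearIndependent ℂ (fun i : Fin (N + 1) => (f i : H)) :=
      hf.map' (LinearMap.range ((Q : H →ₗ[ℂ] H))).subtype (Submodule.ker_subtype _)
    set V : Submodule ℂ H := Submodule.span ℂ (Set.range fun i : Fin (N + 1) => (f i : H))
      with hVdef
    have hVfd : FiniteDimensional ℂ V :=
      FiniteDimensional.span_of_finite ℂ (Set.finite_range _)
    have hVrank : Module.finrank ℂ V = N + 1 := by
      rw [hVdef, finrank_span_eq_card hg', Fintype.card_fin]
    obtain ⟨x, hxV, hx1, hxK⟩ := hyp V hVfd hVrank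
    have hxW : x ∈ LinearMap.range ((Q : H →ₗ[ℂ] H)) := by
      have hVW : V ≤ LinearMap.range ((Q : H →ₗ[ℂ] H)) :=
        Submodule.span_le.mpr (by rintro _ ⟨i, rfl⟩; exact (f i).2)
      exact hVW hxV
    obtain ⟨y, hy⟩ := hxW
    have h8 := hlow y
    have h9 : Q y = x := hy
    rw [h9, hx1] at h8
    nlinarith [norm_nonneg (K x)]
  refine ⟨K * Q, ?_, hKF⟩
  have : FiniteDimensional ℂ
      ((LinearMap.range ((Q : H →ₗ[ℂ] H))).map (K : H →ₗ[ℂ] H)) := by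
    exact Module.Finite.map _ _
  apply Chunk3.isCompactOperator_of_finiteRank
    ((LinearMap.range ((Q : H →ₗ[ℂ] H))).map (K : H →ₗ[ℂ] H))
  rintro _ ⟨x, rfl⟩
  exact ⟨Q x, ⟨x, rfl⟩, rfl⟩

end Chunk4

set_option maxHeartbeats 2000000 in
/-- Lemma 2.4 of the paper: a bounded operator `K` on a Hilbert
space with Hilbert basis `(eᵢ)_{i∈ℕ}` is compact iff its finite sections
`Aₙ = (⟨K eⱼ, eᵢ⟩)_{0 ≤ i,j < n}` converge to the zero sequence in Type 2 strong
cluster sense.  (Mathlib's inner product is conjugate-linear in the first slot, so the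
mathematicians' `⟨K eⱼ, eᵢ⟩` is `⟪eᵢ, K eⱼ⟫`.) -/
theorem isCompactOperator_iff_finiteSections_cluster
    {H : Type*} [NormedAddCommGroup H] [InnerProductSpace ℂ H]
    (e : HilbertBasis ℕ ℂ H) (K : H →L[ℂ] H) :
    IsCompactOperator (⇑K) ↔
      Type2StrongCluster (fun n =>
        Matrix.of fun i j : Fin n =>
          (inner ℂ (e (i : ℕ)) (K (e (j : ℕ))) : ℂ)) := by
  haveI : CompleteSpace H := Chunk3.completeSpace_of_hilbertBasis e
  set Tn : ℕ → H →L[ℂ] H := fun n => ContinuousLinearMap.id ℂ H - Chunk2.projP e n with hTn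
  have hTn_apply : ∀ n x, Tn n x = x - Chunk2.projP e n x := fun n x => rfl
  have hTn_norm : ∀ n, ‖Tn n‖ ≤ 1 := fun n =>
    ContinuousLinearMap.opNorm_le_bound _ zero_le_one fun x => by
      rw [hTn_apply, one_mul]; exact Chunk2.norm_sub_projP_le e n x
  have hTn_tendsto : ∀ x : H, Filter.Tendsto (fun n => Tn n x) Filter.atTop (nhds 0) := fun x => by
    simpa [hTn_apply] using Chunk2.tendsto_sub_projP e x
  constructor
  · -- forward direction
    intro hK ε hε
    have hS : IsCompact (closure (⇑K '' Metric.closedBall 0 1)) := by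
      have h := IsCompactOperator.isCompact_closure_image_closedBall (𝕜₁ := ℂ)
        (f := (K : H →ₗ[ℂ] H)) hK 1
      exact h
    obtain ⟨m, hm⟩ := Chunk3.exists_forall_norm_lt Tn 1 hTn_norm hTn_tendsto hS (half_pos hε)
    have hKm : ‖K - Chunk2.projP e m ∘L K‖ ≤ ε / 2 := by
      refine ContinuousLinearMap.opNorm_le_bound _ (half_pos hε).le fun x => ?_
      by_cases hx : x = 0
      · simp [hx]
      · have hxn : 0 < ‖x‖ := norm_pos_iff.mpr hx
        set c : ℂ := ((‖x‖ : ℝ) : ℂ) with hc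
        set y : H := c⁻¹ • x with hy
        have hcy : c • y = x := by
          rw [hy, smul_smul, mul_inv_cancel₀ (by simpa [hc] using hxn.ne'), one_smul]
        have hyn : ‖y‖ ≤ 1 := by
          rw [hy, norm_smul, norm_inv, hc, Complex.norm_real, Real.norm_of_nonneg hxn.le,
            inv_mul_cancel₀ hxn.ne']
        have hmem : K y ∈ closure (⇑K '' Metric.closedBall 0 1) :=
          subset_closure ⟨y, by simpa [Metric.mem_closedBall, dist_zero_right] using hyn, rfl⟩
        have hlt := hm m le_rfl (K y) hmem
        have heq : (K - Chunk2.projP e m ∘L K) x = c • Tn m (K y) := by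
          rw [← hcy]
          simp only [_root_.map_smul]
          rfl
        rw [heq, norm_smul, hc, Complex.norm_real, Real.norm_of_nonneg hxn.le]
        calc ‖x‖ * ‖Tn m (K y)‖ ≤ ‖x‖ * (ε / 2) := by nlinarith
          _ = ε / 2 * ‖x‖ := by ring
    refine ⟨m, 0, fun n _ => ?_⟩
    refine ⟨Chunk2.secMat e (Chunk2.projP e m ∘L K) n,
      Chunk2.secMat e (K - Chunk2.projP e m ∘L K) n, ?_, ?_, ?_⟩
    · have h1 : Chunk2.projP e m ∘L K + (K - Chunk2.projP e m ∘L K) = K := by abel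
      have h2 : Chunk2.secMat e K n
          = Chunk2.secMat e (Chunk2.projP e m ∘L K) n
            + Chunk2.secMat e (K - Chunk2.projP e m ∘L K) n := by
        rw [← Chunk2.secMat_add, h1]
      exact h2
    · exact Chunk2.rank_secMat_projP_comp_le e K m n
    · calc opNorm (Chunk2.secMat e (K - Chunk2.projP e m ∘L K) n)
          ≤ ‖K - Chunk2.projP e m ∘L K‖ := Chunk2.norm_toEuclideanCLM_secMat_le e _ n
        _ ≤ ε / 2 := hKm
        _ < ε := by linarith
  · -- converse direction
    intro hcl
    have key : ∀ δ > (0:ℝ), ∃ F : H →L[ℂ] H, IsCompactOperator ⇑F ∧ ‖K - F‖ ≤ δ := by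
      intro δ hδ
      set ε₁ : ℝ := δ / 6 with hε₁
      have hε₁pos : 0 < ε₁ := by positivity
      obtain ⟨N₁, N₂, hsplit⟩ := hcl ε₁ hε₁pos
      have hyp : ∀ V : Submodule ℂ H, FiniteDimensional ℂ V →
          Module.finrank ℂ V = N₁ + 1 → ∃ x : H, x ∈ V ∧ ‖x‖ = 1 ∧ ‖K x‖ ≤ δ / 2 := by
        intro V hVfd hVrank
        set SV : Set H := V.subtypeL '' Metric.sphere 0 1 with hSVdef
        have hSV : IsCompact SV := (isCompact_sphere (0:V) 1).image V.subtypeL.continuous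
        have hSV2 : IsCompact (⇑K '' SV) := hSV.image K.continuous
        obtain ⟨N₃, hN₃⟩ := Chunk3.exists_forall_norm_lt Tn 1 hTn_norm hTn_tendsto hSV
          (ε := ε₁ / (‖K‖ + 1)) (by positivity)
        obtain ⟨N₄, hN₄⟩ := Chunk3.exists_forall_norm_lt Tn 1 hTn_norm hTn_tendsto hSV2 hε₁pos
        set n : ℕ := max (N₂ + 1) (max N₃ N₄) with hn
        have hn2 : N₂ < n := lt_of_lt_of_le (Nat.lt_succ_self N₂) (le_max_left _ _)
        have hn3 : N₃ ≤ n := le_trans (le_max_left _ _) (le_max_right _ _)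
        have hn4 : N₄ ≤ n := le_trans (le_max_right _ _) (le_max_right _ _)
        obtain ⟨R, E, hRE, hrank, hE⟩ := hsplit n hn2
        have hRE' : Chunk2.secMat e K n = R + E := hRE
        -- find a unit kernel vector in V
        set ψ : EuclideanSpace ℂ (Fin n) →ₗ[ℂ] EuclideanSpace ℂ (Fin n) :=
          (Matrix.toEuclideanCLM (𝕜 := ℂ) R).toLinearMap with hψ
        set φ : V →ₗ[ℂ] EuclideanSpace ℂ (Fin n) :=
          ψ ∘ₗ ((FSAux.coordL e n).toLinearMap ∘ₗ V.subtype) with hφ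
        have hψrank : Module.finrank ℂ (LinearMap.range ψ) ≤ N₁ := by
          have heq2 : ψ = (WithLp.linearEquiv 2 ℂ (Fin n → ℂ)).symm.toLinearMap
              ∘ₗ (R.mulVecLin ∘ₗ (WithLp.linearEquiv 2 ℂ (Fin n → ℂ)).toLinearMap) := by
            apply LinearMap.ext; intro v; rfl
          have h0 : Module.finrank ℂ (LinearMap.range ψ) = Matrix.rank R := by
            rw [hψ, Matrix.coe_toEuclideanCLM_eq_toEuclideanLin,
              Matrix.rank_eq_finrank_range_toLin R (PiLp.basisFun 2 ℂ (Fin n))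
                (PiLp.basisFun 2 ℂ (Fin n)), Matrix.toEuclideanLin_eq_toLin]
          rw [h0]; exact hrank
        have hkernel : ∃ v : V, v ≠ 0 ∧ φ v = 0 := by
          by_contra hk
          push_neg at hk
          have hinj : Function.Injective φ := by
            rw [← LinearMap.ker_eq_bot, Submodule.eq_bot_iff]
            intro v hv
            by_contra hv0
            exact (hk v hv0) (LinearMap.mem_ker.mp hv)
          have h1 : Module.finrank ℂ (LinearMap.range φ) = N₁ + 1 := by
            rw [LinearMap.finrank_range_of_inj hinj, hVrank]
          have h2 : Module.finrank ℂ (LinearMap.range φ) ≤ N₁ := by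
            refine le_trans (Submodule.finrank_mono ?_) hψrank
            exact LinearMap.range_comp_le_range _ _
          omega
        obtain ⟨v, hv0, hvker⟩ := hkernel
        have hv0' : (v : H) ≠ 0 := fun h => hv0 (Subtype.ext h)
        have hvn : 0 < ‖(v : H)‖ := norm_pos_iff.mpr hv0'
        set c : ℂ := (((‖(v : H)‖)⁻¹ : ℝ) : ℂ) with hc
        set x : H := c • (v : H) with hx
        have hxV : x ∈ V := V.smul_mem c v.2
        have hx1 : ‖x‖ = 1 := by
          rw [hx, norm_smul, hc, Complex.norm_real, Real.norm_of_nonneg (by positivity),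
            inv_mul_cancel₀ hvn.ne']
        have hxker : Matrix.toEuclideanCLM (𝕜 := ℂ) R (FSAux.coordL e n x) = 0 := by
          have h3 : FSAux.coordL e n x = c • FSAux.coordL e n (v : H) := by
            rw [hx, _root_.map_smul]
          have h4 : Matrix.toEuclideanCLM (𝕜 := ℂ) R (FSAux.coordL e n (v : H)) = 0 := hvker
          rw [h3, _root_.map_smul, h4, smul_zero]
        refine ⟨x, hxV, hx1, ?_⟩
        have hxSV : x ∈ SV := by
          refine ⟨⟨x, hxV⟩, ?_, rfl⟩
          have : ‖(⟨x, hxV⟩ : V)‖ = ‖x‖ := rfl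
          simp [Metric.mem_sphere, dist_zero_right, this, hx1]
        have h5 : Tn n x + Chunk2.projP e n x = x := by rw [hTn_apply]; abel
        have hdecomp : K x = Tn n (K x) + (Chunk2.projP e n (K (Tn n x))
            + Chunk2.projP e n (K (Chunk2.projP e n x))) := by
          have h6 : K x = K (Tn n x) + K (Chunk2.projP e n x) := by rw [← _root_.map_add, h5]
          have h7 : K x = Tn n (K x) + Chunk2.projP e n (K x) := by
            rw [hTn_apply]; abel
          calc K x = Tn n (K x) + Chunk2.projP e n (K x) := h7
            _ = Tn n (K x) + Chunk2.projP e n (K (Tn n x) + K (Chunk2.projP e n x)) := by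
                rw [← h6]
            _ = _ := by rw [_root_.map_add]
        have hb1 : ‖Tn n (K x)‖ < ε₁ := hN₄ n hn4 (K x) ⟨x, hxSV, rfl⟩
        have hb2 : ‖Chunk2.projP e n (K (Tn n x))‖ ≤ ε₁ := by
          have h8 : ‖Tn n x‖ < ε₁ / (‖K‖ + 1) := hN₃ n hn3 x hxSV
          calc ‖Chunk2.projP e n (K (Tn n x))‖ ≤ ‖K (Tn n x)‖ :=
                Chunk2.norm_projP_apply_le e n _
            _ ≤ ‖K‖ * ‖Tn n x‖ := K.le_opNorm _
            _ ≤ ‖K‖ * (ε₁ / (‖K‖ + 1)) := by nlinarith [norm_nonneg K, norm_nonneg (Tn n x)]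
            _ ≤ ε₁ := by
                rw [mul_div_assoc', div_le_iff₀ (by positivity)]
                nlinarith [norm_nonneg K]
        have hb3 : ‖Chunk2.projP e n (K (Chunk2.projP e n x))‖ ≤ ε₁ := by
          have h9 : Chunk2.projP e n (K (Chunk2.projP e n x))
              = FSAux.synthL e n
                ((Matrix.toEuclideanCLM (𝕜 := ℂ) (Chunk2.secMat e K n)) (FSAux.coordL e n x)) := by
            rw [Chunk2.toEuclideanCLM_secMat]
            rfl
          have h10 : (Matrix.toEuclideanCLM (𝕜 := ℂ) (Chunk2.secMat e K n)) (FSAux.coordL e n x)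
              = Matrix.toEuclideanCLM (𝕜 := ℂ) E (FSAux.coordL e n x) := by
            rw [hRE', _root_.map_add, ContinuousLinearMap.add_apply, hxker, zero_add]
          rw [h9, h10, FSAux.norm_synthL_apply]
          have h11 : ‖FSAux.coordL e n x‖ ≤ 1 := by
            rw [← hx1]; exact FSAux.norm_coordL_apply_le e n x
          calc ‖Matrix.toEuclideanCLM (𝕜 := ℂ) E (FSAux.coordL e n x)‖
              ≤ ‖Matrix.toEuclideanCLM (𝕜 := ℂ) E‖ * ‖FSAux.coordL e n x‖ :=
                (Matrix.toEuclideanCLM (𝕜 := ℂ) E).le_opNorm _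
            _ ≤ ε₁ * 1 := by
                refine mul_le_mul hE.le h11 (norm_nonneg _) hε₁pos.le
            _ = ε₁ := mul_one _
        have hfinal : ‖K x‖ ≤ 3 * ε₁ := by
          rw [hdecomp]
          calc ‖Tn n (K x) + (Chunk2.projP e n (K (Tn n x))
              + Chunk2.projP e n (K (Chunk2.projP e n x)))‖
              ≤ ‖Tn n (K x)‖ + (‖Chunk2.projP e n (K (Tn n x))‖
                + ‖Chunk2.projP e n (K (Chunk2.projP e n x))‖) :=
                le_trans (norm_add_le _ _) (by gcongr; exact norm_add_le _ _)
            _ ≤ 3 * ε₁ := by linarith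
        rw [hε₁] at hfinal
        linarith [hfinal]
      obtain ⟨F, hFc, hFn⟩ := Chunk4.exists_finiteRank_approx K N₁ (ε := δ / 2)
        (by positivity) hyp
      exact ⟨F, hFc, by linarith⟩
    choose F hFc hFn using fun k : ℕ => key (1 / ((k:ℝ) + 1)) (by positivity)
    apply isCompactOperator_of_tendsto (l := Filter.atTop) (F := F)
    · rw [tendsto_iff_norm_sub_tendsto_zero]
      refine squeeze_zero (fun k => norm_nonneg _) (g := fun k : ℕ => 1 / ((k:ℝ) + 1))
        (fun k => by rw [norm_sub_rev]; exact hFn k) tendsto_one_div_add_atTop_nhds_zero_nat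
    · exact Filter.Eventually.of_forall hFc
end
end

section
/- Let 𝒜 be a C*-algebra, H a complex Hilbert space, and Φ : 𝒜 → B(H) a linear map satisfying Φ(a*) = Φ(a)* and Φ(a)* ∘ Φ(a) ≤ Φ(a* a) for all a ∈ 𝒜 (a Schwarz map). For f, g ∈ 𝒜 set X = Φ(f* f) − Φ(f)* Φ(f), Y = Φ(g* g) − Φ(g)* Φ(g) (both positive operators), and Z = Φ(f* g) − Φ(f)* Φ(g). Then for every x ∈ H, |⟨Z x, x⟩|² ≤ ⟨X x, x⟩ · ⟨Y x, x⟩, where ⟨X x, x⟩ and ⟨Y x, x⟩ are nonnegative real numbers. -/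
open MeasureTheory Matrix
open scoped Real ComplexOrder

noncomputable section

/-- The vector state `T ↦ ⟨T x, x⟩` attached to `x ∈ H` (Mathlib's inner product is
conjugate-linear in the first slot, so the mathematicians' `⟨T x, x⟩` is `⟪x, T x⟫`). -/
def vecState {H : Type*} [NormedAddCommGroup H] [InnerProductSpace ℂ H]
    (x : H) (T : H →L[ℂ] H) : ℂ :=
  inner ℂ x (T x)

/-- Uchiyama's inequality for Schwarz maps with respect to the
operator product, evaluated at vector states: if `Φ : 𝒜 → B(H)` is linear,
`*`-preserving, and satisfies the Schwarz inequality `Φ(a)* Φ(a) ≤ Φ(a* a)` (i.e.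
`Φ(a* a) − Φ(a)* Φ(a)` is a positive operator), then with
`X = Φ(f* f) − Φ(f)* Φ(f)`, `Y = Φ(g* g) − Φ(g)* Φ(g)` and
`Z = Φ(f* g) − Φ(f)* Φ(g)`, for every `x ∈ H` the quantities `⟨X x, x⟩`, `⟨Y x, x⟩`
are nonnegative real numbers and `|⟨Z x, x⟩|² ≤ ⟨X x, x⟩ · ⟨Y x, x⟩`. -/
theorem uchiyama_inequality
    {𝒜 : Type*} [NormedRing 𝒜] [StarRing 𝒜] [CStarRing 𝒜]
    [NormedAlgebra ℂ 𝒜] [StarModule ℂ 𝒜]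
    {H : Type*} [NormedAddCommGroup H] [InnerProductSpace ℂ H] [CompleteSpace H]
    (Φ : 𝒜 →ₗ[ℂ] (H →L[ℂ] H))
    (hstar : ∀ a : 𝒜, Φ (star a) = ContinuousLinearMap.adjoint (Φ a))
    (hschwarz : ∀ a : 𝒜,
      (Φ (star a * a) - ContinuousLinearMap.adjoint (Φ a) ∘L Φ a).IsPositive)
    (f g : 𝒜) (x : H) :
    ((vecState x (Φ (star f * f) - ContinuousLinearMap.adjoint (Φ f) ∘L Φ f)).im = 0 ∧
      0 ≤ (vecState x (Φ (star f * f) - ContinuousLinearMap.adjoint (Φ f) ∘L Φ f)).re ∧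
      (vecState x (Φ (star g * g) - ContinuousLinearMap.adjoint (Φ g) ∘L Φ g)).im = 0 ∧
      0 ≤ (vecState x (Φ (star g * g) - ContinuousLinearMap.adjoint (Φ g) ∘L Φ g)).re) ∧
    ‖vecState x (Φ (star f * g) - ContinuousLinearMap.adjoint (Φ f) ∘L Φ g)‖ ^ 2
      ≤ (vecState x (Φ (star f * f) - ContinuousLinearMap.adjoint (Φ f) ∘L Φ f)).re *
        (vecState x (Φ (star g * g) - ContinuousLinearMap.adjoint (Φ g) ∘L Φ g)).re := by
  classical
  -- the sesquilinear form
  set T : 𝒜 → 𝒜 → (H →L[ℂ] H) :=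
    fun a b => Φ (star a * b) - ContinuousLinearMap.adjoint (Φ a) ∘L Φ b with hT
  have hadj : ∀ a b : 𝒜, ContinuousLinearMap.adjoint (T a b) = T b a := by
    intro a b
    simp only [hT, map_sub, ContinuousLinearMap.adjoint_comp,
      ContinuousLinearMap.adjoint_adjoint, ← hstar, StarMul.star_mul, star_star]
  set B : 𝒜 → 𝒜 → ℂ := fun a b => inner ℂ x ((T a b) x) with hB
  have hconj : ∀ a b : 𝒜, (starRingEnd ℂ) (B b a) = B a b := by
    intro a b
    simp only [hB, inner_conj_symm]
    rw [← ContinuousLinearMap.adjoint_inner_right, hadj]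
  letI core : PreInnerProductSpace.Core ℂ 𝒜 :=
    { inner := B
      conj_inner_symm := hconj
      re_inner_nonneg := by
        intro a
        have h := (hschwarz a).inner_nonneg_right x
        simpa [hB, hT, inner_sub_right] using (Complex.nonneg_iff.mp h).1
      add_left := by
        intro a b c
        simp only [hB, hT]
        have : Φ (star (a + b) * c) = Φ (star a * c) + Φ (star b * c) := by
          rw [star_add, add_mul, map_add]
        rw [this]
        simp only [_root_.map_add, ContinuousLinearMap.sub_apply,
          ContinuousLinearMap.add_apply,
          ContinuousLinearMap.comp_apply, inner_sub_right, inner_add_right]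
        ring
      smul_left := by
        intro a b r
        simp only [hB, hT]
        have h1 : Φ (star (r • a) * b) = (starRingEnd ℂ) r • Φ (star a * b) := by
          rw [star_smul, smul_mul_assoc, Φ.map_smul]; rfl
        have h2 : ContinuousLinearMap.adjoint (Φ (r • a))
            = (starRingEnd ℂ) r • ContinuousLinearMap.adjoint (Φ a) := by
          rw [← hstar, star_smul, Φ.map_smul, hstar]; rfl
        rw [h1, h2]
        simp only [ContinuousLinearMap.sub_apply, ContinuousLinearMap.smul_apply,
          ContinuousLinearMap.smul_comp, ContinuousLinearMap.comp_apply,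
          inner_sub_right, inner_smul_right]
        ring }
  have key := InnerProductSpace.Core.inner_mul_inner_self_le (𝕜 := ℂ) (F := 𝒜) f g
  have him : ∀ a : 𝒜, (B a a).im = 0 := by
    intro a
    exact InnerProductSpace.Core.inner_self_im (𝕜 := ℂ) (F := 𝒜) a
  have hre : ∀ a : 𝒜, 0 ≤ (B a a).re := fun a => core.re_inner_nonneg a
  have hBeq : ∀ a b : 𝒜, vecState x
      (Φ (star a * b) - ContinuousLinearMap.adjoint (Φ a) ∘L Φ b) = B a b := by
    intro a b; rfl
  refine ⟨⟨?_, ?_, ?_, ?_⟩, ?_⟩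
  · rw [hBeq]; exact him f
  · rw [hBeq]; exact hre f
  · rw [hBeq]; exact him g
  · rw [hBeq]; exact hre g
  · rw [hBeq, hBeq, hBeq]
    have hsymm : ‖B g f‖ = ‖B f g‖ := by
      rw [← hconj f g, RCLike.norm_conj]
    calc ‖B f g‖ ^ 2 = ‖B f g‖ * ‖B g f‖ := by rw [hsymm, sq]
      _ ≤ RCLike.re (B f f) * RCLike.re (B g g) := key
      _ = (B f f).re * (B g g).re := rfl

end
end

section
/- Let f and g be essentially bounded measurable functions on the circle 𝕋 = AddCircle (2π), let n ≥ 1, and let x ∈ ℂⁿ. Then |⟨(T_n(f̄g) − T_n(f̄)·T_n(g)) x, x⟩|² ≤ ⟨(T_n(|f|²) − T_n(f̄)·T_n(f)) x, x⟩ · ⟨(T_n(|g|²) − T_n(ḡ)·T_n(g)) x, x⟩, where the two factors on the right-hand side are nonnegative real numbers. -/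
open MeasureTheory Matrix AddCircle
open scoped Real ComplexOrder

noncomputable section

/-- The quadratic form `x ↦ ⟨A x, x⟩ = (star x) ⬝ᵥ (A *ᵥ x)` of an `n × n` matrix. -/
def quadForm {n : ℕ} (A : Matrix (Fin n) (Fin n) ℂ) (x : Fin n → ℂ) : ℂ :=
  star x ⬝ᵥ A.mulVec x

namespace UchiyamaAux

local notation "μH" => (haarAddCircle : Measure 𝕋)
local notation "⟪" x ", " y "⟫" => @inner ℂ _ _ x y

lemma mul_memtop {a b : 𝕋 → ℂ} (ha : MemLp a ⊤ μH) (hb : MemLp b ⊤ μH) :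
    MemLp (fun t => a t * b t) ⊤ μH := by
  have h : MemLp (a • b) ⊤ μH := MemLp.smul (r := ⊤) hb ha
  exact h.ae_eq (Filter.Eventually.of_forall fun t => rfl)

lemma conj_memtop {a : 𝕋 → ℂ} (ha : MemLp a ⊤ μH) :
    MemLp (fun t => (starRingEnd ℂ) (a t)) ⊤ μH :=
  ha.congr_norm (Complex.continuous_conj.comp_aestronglyMeasurable ha.1)
    (Filter.Eventually.of_forall fun t => (RCLike.norm_conj _).symm)

lemma integrable_of_top {h : 𝕋 → ℂ} (hh : MemLp h ⊤ μH) : Integrable h μH :=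
  memLp_one_iff_integrable.mp (hh.mono_exponent le_top)

lemma fourier_memtop (k : ℤ) : MemLp (fun t : 𝕋 => fourier k t) ⊤ μH := by
  refine memLp_top_of_bound ((map_continuous (fourier k)).aestronglyMeasurable) 1
    (Filter.Eventually.of_forall fun t => ?_)
  exact le_of_eq (Circle.norm_coe _)

/-- The trigonometric polynomial `p = ∑ xⱼ eⱼ`. -/
def pfun (n : ℕ) (x : Fin n → ℂ) : 𝕋 → ℂ :=
  fun t => ∑ j : Fin n, x j * fourier ((j : ℕ) : ℤ) t

lemma pfun_memtop (n : ℕ) (x : Fin n → ℂ) : MemLp (pfun n x) ⊤ μH :=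
  memLp_finset_sum _ fun j _ => (fourier_memtop _).const_mul _

lemma Ufun_memtop {a : 𝕋 → ℂ} (ha : MemLp a ⊤ μH) (n : ℕ) (x : Fin n → ℂ) :
    MemLp (fun t => a t * pfun n x t) ⊤ μH :=
  mul_memtop ha (pfun_memtop n x)

/-- `a·p` as an element of `L²`. -/
def UL {a : 𝕋 → ℂ} (ha : MemLp a ⊤ μH) (n : ℕ) (x : Fin n → ℂ) : Lp ℂ 2 μH :=
  ((Ufun_memtop ha n x).mono_exponent le_top).toLp _

lemma inner_toLp_eq {u v : 𝕋 → ℂ} (hu : MemLp u 2 μH) (hv : MemLp v 2 μH) :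
    ⟪hu.toLp u, hv.toLp v⟫ = ∫ t, (starRingEnd ℂ) (u t) * v t ∂μH := by
  rw [MeasureTheory.L2.inner_def]
  refine integral_congr_ae ?_
  filter_upwards [hu.coeFn_toLp, hv.coeFn_toLp] with t h1 h2
  simp only [h1, h2, RCLike.inner_apply]
  ring

lemma fourierCoeff_eq_integral_mul (a : 𝕋 → ℂ) (m j : ℤ) :
    fourierCoeff a (m - j) = ∫ t, fourier (j - m) t * a t ∂μH := by
  unfold fourierCoeff
  rw [neg_sub]
  refine integral_congr_ae (Filter.Eventually.of_forall fun t => ?_)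
  simp only [smul_eq_mul]

/-- Fourier coefficients of `a·p`. -/
lemma fourierCoeff_mul_p {a : 𝕋 → ℂ} (ha : MemLp a ⊤ μH) (n : ℕ) (x : Fin n → ℂ) (m : ℤ) :
    fourierCoeff (fun t => a t * pfun n x t) m
      = ∑ j : Fin n, x j * fourierCoeff a (m - ((j : ℕ) : ℤ)) := by
  have hint : ∀ j : Fin n, Integrable
      (fun t => x j * (fourier ((((j : ℕ) : ℤ)) - m) t * a t)) μH := fun j =>
    (integrable_of_top (mul_memtop (fourier_memtop _) ha)).const_mul _
  calc fourierCoeff (fun t => a t * pfun n x t) m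
      = ∫ t, ∑ j : Fin n, x j * (fourier ((((j : ℕ) : ℤ)) - m) t * a t) ∂μH := by
        unfold fourierCoeff pfun
        refine integral_congr_ae (Filter.Eventually.of_forall fun t => ?_)
        simp only [smul_eq_mul, Finset.mul_sum]
        refine Finset.sum_congr rfl fun j _ => ?_
        rw [sub_eq_add_neg, fourier_add]
        ring
    _ = ∑ j : Fin n, x j * fourierCoeff a (m - ((j : ℕ) : ℤ)) := by
        rw [integral_finset_sum _ fun j _ => hint j]
        refine Finset.sum_congr rfl fun j _ => ?_
        rw [integral_const_mul, fourierCoeff_eq_integral_mul]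

lemma quadForm_apply {n : ℕ} (A : Matrix (Fin n) (Fin n) ℂ) (x : Fin n → ℂ) :
    quadForm A x
      = ∑ i : Fin n, ∑ j : Fin n, (starRingEnd ℂ) (x i) * A i j * x j := by
  simp only [quadForm, Matrix.mulVec, dotProduct]
  refine Finset.sum_congr rfl fun i _ => ?_
  rw [Finset.mul_sum]
  refine Finset.sum_congr rfl fun j _ => ?_
  simp only [Pi.star_apply, RCLike.star_def]
  ring

lemma quadForm_sub {n : ℕ} (A B : Matrix (Fin n) (Fin n) ℂ) (x : Fin n → ℂ) :
    quadForm (A - B) x = quadForm A x - quadForm B x := by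
  unfold quadForm
  rw [Matrix.sub_mulVec, dotProduct_sub]

/-- Quadratic form of the Toeplitz matrix of `ā·b` as an `L²` inner product. -/
lemma quad_toeplitz {a b : 𝕋 → ℂ} (ha : MemLp a ⊤ μH) (hb : MemLp b ⊤ μH)
    (n : ℕ) (x : Fin n → ℂ) :
    quadForm (toeplitz n (fun t => (starRingEnd ℂ) (a t) * b t)) x
      = ⟪UL ha n x, UL hb n x⟫ := by
  have hab : MemLp (fun t => (starRingEnd ℂ) (a t) * b t) ⊤ μH :=
    mul_memtop (conj_memtop ha) hb
  have hint : ∀ i j : Fin n, Integrable (fun t =>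
      ((starRingEnd ℂ) (x i) * x j) *
        (fourier ((((j : ℕ) : ℤ)) - ((i : ℕ) : ℤ)) t *
          ((starRingEnd ℂ) (a t) * b t))) μH := fun i j =>
    (integrable_of_top (mul_memtop (fourier_memtop _) hab)).const_mul _
  have key : ∀ t : 𝕋, (starRingEnd ℂ) (a t * pfun n x t) * (b t * pfun n x t)
      = ∑ i : Fin n, ∑ j : Fin n, ((starRingEnd ℂ) (x i) * x j) *
          (fourier ((((j : ℕ) : ℤ)) - ((i : ℕ) : ℤ)) t *
            ((starRingEnd ℂ) (a t) * b t)) := by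
    intro t
    calc (starRingEnd ℂ) (a t * pfun n x t) * (b t * pfun n x t)
        = (∑ i : Fin n, (starRingEnd ℂ) (x i) * (starRingEnd ℂ) (fourier ((i : ℕ) : ℤ) t)) *
            (∑ j : Fin n, x j * fourier ((j : ℕ) : ℤ) t) * ((starRingEnd ℂ) (a t) * b t) := by
          simp only [pfun, _root_.map_mul, map_sum]
          ring
      _ = ∑ i : Fin n, ∑ j : Fin n,
            ((starRingEnd ℂ) (x i) * (starRingEnd ℂ) (fourier ((i : ℕ) : ℤ) t)) *
              (x j * fourier ((j : ℕ) : ℤ) t) * ((starRingEnd ℂ) (a t) * b t) := by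
          rw [Finset.sum_mul_sum]
          simp only [Finset.sum_mul]
      _ = _ := by
          refine Finset.sum_congr rfl fun i _ => Finset.sum_congr rfl fun j _ => ?_
          rw [sub_eq_add_neg, fourier_add, fourier_neg]
          ring
  unfold UL
  rw [inner_toLp_eq, quadForm_apply]
  calc ∑ i : Fin n, ∑ j : Fin n,
        (starRingEnd ℂ) (x i) *
          toeplitz n (fun t => (starRingEnd ℂ) (a t) * b t) i j * x j
      = ∑ i : Fin n, ∑ j : Fin n, ((starRingEnd ℂ) (x i) * x j) *
          ∫ t, fourier ((((j : ℕ) : ℤ)) - ((i : ℕ) : ℤ)) t *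
            ((starRingEnd ℂ) (a t) * b t) ∂μH := by
        refine Finset.sum_congr rfl fun i _ => Finset.sum_congr rfl fun j _ => ?_
        rw [toeplitz, Matrix.of_apply, fourierCoeff_eq_integral_mul]
        ring
    _ = ∑ i : Fin n, ∑ j : Fin n, ∫ t, ((starRingEnd ℂ) (x i) * x j) *
          (fourier ((((j : ℕ) : ℤ)) - ((i : ℕ) : ℤ)) t *
            ((starRingEnd ℂ) (a t) * b t)) ∂μH := by
        refine Finset.sum_congr rfl fun i _ => Finset.sum_congr rfl fun j _ => ?_
        rw [integral_const_mul]
    _ = ∫ t, ∑ i : Fin n, ∑ j : Fin n, ((starRingEnd ℂ) (x i) * x j) *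
          (fourier ((((j : ℕ) : ℤ)) - ((i : ℕ) : ℤ)) t *
            ((starRingEnd ℂ) (a t) * b t)) ∂μH := by
        rw [integral_finset_sum _ fun i _ => integrable_finset_sum _ fun j _ => hint i j]
        exact Finset.sum_congr rfl fun i _ =>
          (integral_finset_sum _ fun j _ => hint i j).symm
    _ = ∫ t, (starRingEnd ℂ) (a t * pfun n x t) * (b t * pfun n x t) ∂μH := by
        refine integral_congr_ae (Filter.Eventually.of_forall fun t => ?_)
        exact (key t).symm

/-- Quadratic form of the product `Tₙ(a)ᴴ Tₙ(b)`. -/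
lemma quad_prod (a b : 𝕋 → ℂ) (n : ℕ) (x : Fin n → ℂ) :
    quadForm ((toeplitz n a)ᴴ * toeplitz n b) x
      = ∑ k : Fin n,
          (starRingEnd ℂ) (∑ i : Fin n, x i * fourierCoeff a (((k : ℕ) : ℤ) - ((i : ℕ) : ℤ))) *
          (∑ j : Fin n, x j * fourierCoeff b (((k : ℕ) : ℤ) - ((j : ℕ) : ℤ))) := by
  rw [quadForm_apply]
  have swap3 : ∀ F : Fin n → Fin n → Fin n → ℂ,
      ∑ i : Fin n, ∑ j : Fin n, ∑ k : Fin n, F i j k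
        = ∑ k : Fin n, ∑ i : Fin n, ∑ j : Fin n, F i j k := by
    intro F
    have h1 : ∀ i : Fin n, ∑ j : Fin n, ∑ k : Fin n, F i j k
        = ∑ k : Fin n, ∑ j : Fin n, F i j k := fun i => Finset.sum_comm
    simp_rw [h1]
    exact Finset.sum_comm
  calc ∑ i : Fin n, ∑ j : Fin n,
        (starRingEnd ℂ) (x i) * ((toeplitz n a)ᴴ * toeplitz n b) i j * x j
      = ∑ i : Fin n, ∑ j : Fin n, ∑ k : Fin n,
          ((starRingEnd ℂ) (x i) *
            (starRingEnd ℂ) (fourierCoeff a (((k : ℕ) : ℤ) - ((i : ℕ) : ℤ)))) *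
          (x j * fourierCoeff b (((k : ℕ) : ℤ) - ((j : ℕ) : ℤ))) := by
        refine Finset.sum_congr rfl fun i _ => Finset.sum_congr rfl fun j _ => ?_
        rw [Matrix.mul_apply]
        rw [Finset.mul_sum, Finset.sum_mul]
        refine Finset.sum_congr rfl fun k _ => ?_
        simp only [Matrix.conjTranspose_apply, toeplitz, Matrix.of_apply,
          RCLike.star_def]
        ring
    _ = ∑ k : Fin n, ∑ i : Fin n, ∑ j : Fin n,
          ((starRingEnd ℂ) (x i) *
            (starRingEnd ℂ) (fourierCoeff a (((k : ℕ) : ℤ) - ((i : ℕ) : ℤ)))) *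
          (x j * fourierCoeff b (((k : ℕ) : ℤ) - ((j : ℕ) : ℤ))) := swap3 _
    _ = _ := by
        refine Finset.sum_congr rfl fun k _ => ?_
        rw [map_sum, Finset.sum_mul_sum]
        refine Finset.sum_congr rfl fun i _ => Finset.sum_congr rfl fun j _ => ?_
        rw [_root_.map_mul]

lemma inner_fourierLp {u : 𝕋 → ℂ} (hu : MemLp u 2 μH) (k : ℤ) :
    ⟪(fourierLp 2 k : Lp ℂ 2 μH), hu.toLp u⟫ = fourierCoeff u k := by
  rw [← coe_fourierBasis, ← fourierBasis.repr_apply_apply, fourierBasis_repr]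
  unfold fourierCoeff
  refine integral_congr_ae ?_
  filter_upwards [hu.coeFn_toLp] with t ht
  simp only [ht]

/-- The Fourier coefficients of `a·p` indexed by `Fin n`. -/
def coeffs (a : 𝕋 → ℂ) (n : ℕ) (x : Fin n → ℂ) : Fin n → ℂ :=
  fun k => fourierCoeff (fun t => a t * pfun n x t) ((k : ℕ) : ℤ)

/-- `a·p` minus its projection onto `span {e₀, …, e_{n-1}}`. -/
def WL {a : 𝕋 → ℂ} (ha : MemLp a ⊤ μH) (n : ℕ) (x : Fin n → ℂ) : Lp ℂ 2 μH :=
  UL ha n x - ∑ k : Fin n, coeffs a n x k • (fourierLp 2 ((k : ℕ) : ℤ) : Lp ℂ 2 μH)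

lemma inner_W {a b : 𝕋 → ℂ} (ha : MemLp a ⊤ μH) (hb : MemLp b ⊤ μH)
    (n : ℕ) (x : Fin n → ℂ) :
    ⟪WL ha n x, WL hb n x⟫ = ⟪UL ha n x, UL hb n x⟫
      - ∑ k : Fin n, (starRingEnd ℂ) (coeffs a n x k) * coeffs b n x k := by
  have hca : ∀ k : Fin n,
      ⟪(fourierLp 2 ((k : ℕ) : ℤ) : Lp ℂ 2 μH), UL ha n x⟫ = coeffs a n x k :=
    fun k => inner_fourierLp _ _
  have hcb : ∀ k : Fin n,
      ⟪(fourierLp 2 ((k : ℕ) : ℤ) : Lp ℂ 2 μH), UL hb n x⟫ = coeffs b n x k :=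
    fun k => inner_fourierLp _ _
  have hortho : ∀ k l : Fin n,
      ⟪(fourierLp 2 ((k : ℕ) : ℤ) : Lp ℂ 2 μH), (fourierLp 2 ((l : ℕ) : ℤ))⟫
        = if k = l then 1 else 0 := by
    intro k l
    rw [orthonormal_iff_ite.mp orthonormal_fourier]
    simp [Fin.val_inj]
  have hSU : ⟪∑ k : Fin n, coeffs a n x k • (fourierLp 2 ((k : ℕ) : ℤ) : Lp ℂ 2 μH),
      UL hb n x⟫ = ∑ k : Fin n, (starRingEnd ℂ) (coeffs a n x k) * coeffs b n x k := by
    rw [sum_inner]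
    exact Finset.sum_congr rfl fun k _ => by rw [inner_smul_left, hcb]
  have hUS : ⟪UL ha n x,
      ∑ k : Fin n, coeffs b n x k • (fourierLp 2 ((k : ℕ) : ℤ) : Lp ℂ 2 μH)⟫
      = ∑ k : Fin n, (starRingEnd ℂ) (coeffs a n x k) * coeffs b n x k := by
    rw [inner_sum]
    refine Finset.sum_congr rfl fun k _ => ?_
    rw [inner_smul_right, ← inner_conj_symm, hca]
    ring
  have hSS : ⟪∑ k : Fin n, coeffs a n x k • (fourierLp 2 ((k : ℕ) : ℤ) : Lp ℂ 2 μH),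
      ∑ l : Fin n, coeffs b n x l • (fourierLp 2 ((l : ℕ) : ℤ) : Lp ℂ 2 μH)⟫
      = ∑ k : Fin n, (starRingEnd ℂ) (coeffs a n x k) * coeffs b n x k := by
    rw [sum_inner]
    have : ∀ k : Fin n,
        ⟪coeffs a n x k • (fourierLp 2 ((k : ℕ) : ℤ) : Lp ℂ 2 μH),
          ∑ l : Fin n, coeffs b n x l • (fourierLp 2 ((l : ℕ) : ℤ) : Lp ℂ 2 μH)⟫
          = (starRingEnd ℂ) (coeffs a n x k) * coeffs b n x k := by
      intro k
      rw [inner_sum]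
      have : ∀ l : Fin n,
          ⟪coeffs a n x k • (fourierLp 2 ((k : ℕ) : ℤ) : Lp ℂ 2 μH),
            coeffs b n x l • (fourierLp 2 ((l : ℕ) : ℤ) : Lp ℂ 2 μH)⟫
          = if k = l then (starRingEnd ℂ) (coeffs a n x k) * coeffs b n x l else 0 := by
        intro l
        rw [inner_smul_left, inner_smul_right, hortho]
        by_cases h : k = l <;> simp [h]
      rw [Finset.sum_congr rfl fun l _ => this l]
      simp
    rw [Finset.sum_congr rfl fun k _ => this k]
  unfold WL
  rw [inner_sub_left, inner_sub_right, inner_sub_right, hSU, hUS, hSS]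
  ring

/-- The central identity. -/
lemma quad_eq_inner {a b : 𝕋 → ℂ} (ha : MemLp a ⊤ μH) (hb : MemLp b ⊤ μH)
    (n : ℕ) (x : Fin n → ℂ) :
    quadForm (toeplitz n (fun t => (starRingEnd ℂ) (a t) * b t)
        - (toeplitz n a)ᴴ * toeplitz n b) x
      = ⟪WL ha n x, WL hb n x⟫ := by
  rw [quadForm_sub, quad_toeplitz ha hb, quad_prod, inner_W ha hb]
  congr 1
  refine Finset.sum_congr rfl fun k _ => ?_
  rw [coeffs, coeffs, fourierCoeff_mul_p ha, fourierCoeff_mul_p hb]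

end UchiyamaAux

/-- Uchiyama's inequality applied to the Schwarz maps `h ↦ Tₙ(h)`,
with vector states: for essentially bounded `f, g`, `n ≥ 1` and `x ∈ ℂⁿ`,
`|⟨(Tₙ(f̄g) − Tₙ(f̄)Tₙ(g)) x, x⟩|² ≤ ⟨(Tₙ(|f|²) − Tₙ(f̄)Tₙ(f)) x, x⟩ ·
⟨(Tₙ(|g|²) − Tₙ(ḡ)Tₙ(g)) x, x⟩`, the two right-hand factors being nonnegative reals.
Here `Tₙ(h̄) = (Tₙ h)ᴴ`. -/
theorem uchiyama_inequality_toeplitz (f g : 𝕋 → ℂ)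
    (hf : MemLp f ⊤ haarAddCircle) (hg : MemLp g ⊤ haarAddCircle)
    (n : ℕ) (hn : 1 ≤ n) (x : Fin n → ℂ) :
    ((quadForm (toeplitz n (fun t => f t * (starRingEnd ℂ) (f t))
        - (toeplitz n f)ᴴ * toeplitz n f) x).im = 0 ∧
      0 ≤ (quadForm (toeplitz n (fun t => f t * (starRingEnd ℂ) (f t))
        - (toeplitz n f)ᴴ * toeplitz n f) x).re ∧
      (quadForm (toeplitz n (fun t => g t * (starRingEnd ℂ) (g t))
        - (toeplitz n g)ᴴ * toeplitz n g) x).im = 0 ∧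
      0 ≤ (quadForm (toeplitz n (fun t => g t * (starRingEnd ℂ) (g t))
        - (toeplitz n g)ᴴ * toeplitz n g) x).re) ∧
    ‖quadForm (toeplitz n (fun t => (starRingEnd ℂ) (f t) * g t)
        - (toeplitz n f)ᴴ * toeplitz n g) x‖ ^ 2
      ≤ (quadForm (toeplitz n (fun t => f t * (starRingEnd ℂ) (f t))
          - (toeplitz n f)ᴴ * toeplitz n f) x).re *
        (quadForm (toeplitz n (fun t => g t * (starRingEnd ℂ) (g t))
          - (toeplitz n g)ᴴ * toeplitz n g) x).re := by
  have e1 : (fun t => f t * (starRingEnd ℂ) (f t))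
      = fun t => (starRingEnd ℂ) (f t) * f t := funext fun t => mul_comm _ _
  have e2 : (fun t => g t * (starRingEnd ℂ) (g t))
      = fun t => (starRingEnd ℂ) (g t) * g t := funext fun t => mul_comm _ _
  rw [e1, e2, UchiyamaAux.quad_eq_inner hf hf n x, UchiyamaAux.quad_eq_inner hg hg n x,
    UchiyamaAux.quad_eq_inner hf hg n x]
  set u := UchiyamaAux.WL hf n x with hu
  set v := UchiyamaAux.WL hg n x with hv
  have hre : ∀ w : Lp ℂ 2 (haarAddCircle : Measure 𝕋),
      (@inner ℂ _ _ w w).re = ‖w‖ ^ 2 := by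
    intro w
    simpa using inner_self_eq_norm_sq (𝕜 := ℂ) w
  have him : ∀ w : Lp ℂ 2 (haarAddCircle : Measure 𝕋),
      (@inner ℂ _ _ w w).im = 0 := by
    intro w
    rw [← RCLike.im_to_complex]
    exact inner_self_im (𝕜 := ℂ) w
  refine ⟨⟨him u, ?_, him v, ?_⟩, ?_⟩
  · rw [hre u]; positivity
  · rw [hre v]; positivity
  · rw [hre u, hre v]
    calc ‖@inner ℂ _ _ u v‖ ^ 2 ≤ (‖u‖ * ‖v‖) ^ 2 := by
          have := norm_inner_le_norm (𝕜 := ℂ) u v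
          exact pow_le_pow_left₀ (norm_nonneg _) this 2
      _ = ‖u‖ ^ 2 * ‖v‖ ^ 2 := by ring
end
end

section
/- Let f be a square-integrable function on the circle 𝕋 = AddCircle (2π) and let n ≥ 1. Then both matrices T_n(|f|²) − T_n(f̄)·T_n(f) and T_n(|f|²) − T_n(f)·T_n(f̄) are Hermitian positive semidefinite. -/
open MeasureTheory Matrix AddCircle
open scoped Real ComplexOrder ComplexConjugate ENNReal
open Complex

noncomputable section

local notation "μ" => (haarAddCircle : Measure 𝕋)

/-- The trigonometric polynomial with coefficients `x`. -/
def trig {n : ℕ} (x : Fin n → ℂ) : 𝕋 → ℂ := fun t => ∑ j : Fin n, x j * fourier ((j : ℕ) : ℤ) t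

lemma trig_continuous {n : ℕ} (x : Fin n → ℂ) : Continuous (trig x) :=
  continuous_finset_sum _ fun j _ => continuous_const.mul (fourier _).continuous

lemma norm_fourier (k : ℤ) (t : 𝕋) : ‖(fourier k t : ℂ)‖ = 1 := by simp [fourier_apply, Circle.norm_coe]

lemma memLp_mul_trig {g : 𝕋 → ℂ} (hg : MemLp g 2 μ) {n : ℕ} (x : Fin n → ℂ) :
    MemLp (fun t => g t * trig x t) 2 μ := by
  have htop : MemLp (trig x) ⊤ μ := by
    obtain ⟨C, hC⟩ := (isCompact_range (trig_continuous x).norm).bddAbove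
    exact memLp_top_of_bound (trig_continuous x).aestronglyMeasurable C <|
      Filter.Eventually.of_forall fun t => hC ⟨t, rfl⟩
  have := MemLp.smul (r := 2) hg htop
  simpa [smul_eq_mul, Pi.mul_def, mul_comm] using this

lemma integrable_mul_trig {g : 𝕋 → ℂ} (hg : MemLp g 2 μ) {n : ℕ} (x : Fin n → ℂ) :
    Integrable (fun t => g t * trig x t) μ :=
  (memLp_mul_trig hg x).integrable one_le_two

lemma memLp_conj {g : 𝕋 → ℂ} (hg : MemLp g 2 μ) : MemLp (fun t => conj (g t)) 2 μ :=
  MemLp.of_le hg (RCLike.continuous_conj.comp_aestronglyMeasurable hg.1)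
    (Filter.Eventually.of_forall fun t => by simp)

lemma integrable_sq {g : 𝕋 → ℂ} (hg : MemLp g 2 μ) :
    Integrable (fun t => g t * conj (g t)) μ := by
  have h2 : (1 : ℝ≥0∞) / 1 = 1 / 2 + 1 / 2 := by
    rw [one_div_one, ENNReal.div_add_div_same, one_add_one_eq_two,
      ENNReal.div_self two_ne_zero ENNReal.ofNat_ne_top]
  have := ((memLp_conj hg).smul hg (hpqr := ⟨by simpa only [one_div] using h2.symm⟩)).integrable le_rfl
  simpa [smul_eq_mul, Pi.mul_def] using this

lemma integrable_fourier_mul {g : 𝕋 → ℂ} (hg : Integrable g μ) (k : ℤ) :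
    Integrable (fun t => fourier k t * g t) μ :=
  hg.bdd_mul (c := 1) (fourier k).continuous.aestronglyMeasurable
    (Filter.Eventually.of_forall fun t => (norm_fourier k t).le)

/-- Fourier coefficients respect a.e. equality. -/
lemma fourierCoeff_congr_ae'_s9 {g h : 𝕋 → ℂ} (hgh : g =ᵐ[μ] h) (k : ℤ) :
    fourierCoeff g k = fourierCoeff h k :=
  integral_congr_ae <| by filter_upwards [hgh] with t ht; rw [ht]

/-- Fourier coefficients of the conjugate. -/
lemma fourierCoeff_conj (g : 𝕋 → ℂ) (k : ℤ) :
    fourierCoeff (fun t => conj (g t)) k = conj (fourierCoeff g (-k)) := by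
  rw [fourierCoeff, fourierCoeff, ← integral_conj]
  refine integral_congr_ae (Filter.Eventually.of_forall fun t => ?_)
  simp only [smul_eq_mul, _root_.map_mul, neg_neg, ← fourier_neg]

/-- Fourier coefficients of `g` times a trigonometric polynomial. -/
lemma fourierCoeff_mul_trig {g : 𝕋 → ℂ} (hg : Integrable g μ) {n : ℕ} (x : Fin n → ℂ) (k : ℤ) :
    fourierCoeff (fun t => g t * trig x t) k
      = ∑ j : Fin n, x j * fourierCoeff g (k - ((j : ℕ) : ℤ)) := by
  rw [fourierCoeff]
  have hpt : ∀ t : 𝕋, fourier (-k) t • (g t * trig x t)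
      = ∑ j : Fin n, x j * (fourier (((j : ℕ) : ℤ) - k) t * g t) := by
    intro t
    simp only [smul_eq_mul, trig, Finset.mul_sum]
    refine Finset.sum_congr rfl fun j _ => ?_
    rw [sub_eq_add_neg, fourier_add]
    ring
  simp_rw [hpt]
  rw [integral_finset_sum _ fun j _ => (integrable_fourier_mul hg _).const_mul (x j)]
  refine Finset.sum_congr rfl fun j _ => ?_
  rw [integral_const_mul, fourierCoeff]
  congr 2
  funext t
  rw [smul_eq_mul, neg_sub]

lemma mul_conj_eq (z : ℂ) : z * conj z = ((‖z‖ ^ 2 : ℝ) : ℂ) := by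
  rw [Complex.mul_conj]; norm_cast; exact Complex.normSq_eq_norm_sq z

/-- Parseval: summability of squared Fourier coefficients for `L²` functions. -/
lemma summable_sq_fourierCoeff_s9 {G : 𝕋 → ℂ} (hG : MemLp G 2 μ) :
    Summable fun k : ℤ => ‖fourierCoeff G k‖ ^ 2 := by
  have hcoe : ∀ k, fourierCoeff G k = fourierCoeff (hG.toLp G) k := fun k =>
    fourierCoeff_congr_ae'_s9 hG.coeFn_toLp.symm k
  have hmem := lp.memℓp (fourierBasis.repr (hG.toLp G))
  have hsum := (memℓp_gen_iff (p := 2) (by norm_num)).mp hmem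
  simp only [fourierBasis_repr, ENNReal.toReal_ofNat] at hsum
  have : ∀ k : ℤ, ‖fourierCoeff (hG.toLp G) k‖ ^ ((2 : ℝ)) = ‖fourierCoeff G k‖ ^ (2 : ℕ) := by
    intro k
    rw [← hcoe, ← Real.rpow_natCast]
    norm_num
  simpa only [this] using hsum

/-- Parseval's identity for `MemLp` functions. -/
lemma tsum_sq_fourierCoeff' {G : 𝕋 → ℂ} (hG : MemLp G 2 μ) :
    ∑' k : ℤ, ‖fourierCoeff G k‖ ^ 2 = ∫ t, ‖G t‖ ^ 2 ∂μ := by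
  have hcoe : ∀ k, fourierCoeff G k = fourierCoeff (hG.toLp G) k := fun k =>
    fourierCoeff_congr_ae'_s9 hG.coeFn_toLp.symm k
  simp_rw [hcoe]
  rw [tsum_sq_fourierCoeff (hG.toLp G)]
  refine integral_congr_ae ?_
  filter_upwards [hG.coeFn_toLp] with t ht
  rw [ht]


lemma trig_bdd {n : ℕ} (x : Fin n → ℂ) : ∃ C, ∀ t : 𝕋, ‖trig x t‖ ≤ C :=
  ⟨∑ j : Fin n, ‖x j‖, fun t => (norm_sum_le _ _).trans <| le_of_eq <| by
    simp [norm_mul, norm_fourier, fourier_apply, Circle.norm_coe]⟩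

lemma integrable_mul_trig' {h : 𝕋 → ℂ} (hh : Integrable h μ) {n : ℕ} (x : Fin n → ℂ) :
    Integrable (fun t => h t * trig x t) μ := by
  have := hh.bdd_mul (trig_continuous x).aestronglyMeasurable
    (Filter.Eventually.of_forall (trig_bdd x).choose_spec)
  simpa [mul_comm] using this

lemma conj_trig {n : ℕ} (x : Fin n → ℂ) (t : 𝕋) :
    conj (trig x t) = ∑ i : Fin n, conj (x i) * fourier (-((i : ℕ) : ℤ)) t := by
  simp only [trig, map_sum, _root_.map_mul, fourier_neg]

lemma mulVec_toeplitz {h : 𝕋 → ℂ} (hh : Integrable h μ) {n : ℕ} (x : Fin n → ℂ) (i : Fin n) :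
    (toeplitz n h *ᵥ x) i = fourierCoeff (fun t => h t * trig x t) ((i : ℕ) : ℤ) := by
  rw [fourierCoeff_mul_trig hh]
  simp only [Matrix.mulVec, dotProduct, toeplitz, Matrix.of_apply]
  exact Finset.sum_congr rfl fun j _ => mul_comm _ _

lemma dot_toeplitz {h : 𝕋 → ℂ} (hh : Integrable h μ) {n : ℕ} (x : Fin n → ℂ) :
    star x ⬝ᵥ (toeplitz n h *ᵥ x) = ∫ t, conj (trig x t) * (h t * trig x t) ∂μ := by
  have hg : Integrable (fun t => h t * trig x t) μ := integrable_mul_trig' hh x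
  have h2 : ∀ i : Fin n, (star x) i * (toeplitz n h *ᵥ x) i
      = ∫ t, (conj (x i) * fourier (-((i : ℕ) : ℤ)) t) * (h t * trig x t) ∂μ := by
    intro i
    rw [mulVec_toeplitz hh, fourierCoeff, ← integral_const_mul]
    refine integral_congr_ae (Filter.Eventually.of_forall fun t => ?_)
    simp only [smul_eq_mul, Pi.star_apply, RCLike.star_def]
    ring
  rw [dotProduct, Finset.sum_congr rfl fun i _ => h2 i, ← integral_finset_sum]
  · refine integral_congr_ae (Filter.Eventually.of_forall fun t => ?_)
    simp only [← Finset.sum_mul, ← conj_trig]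
  · intro i _
    have := (integrable_fourier_mul hg (-((i : ℕ) : ℤ))).const_mul (conj (x i))
    simpa [mul_assoc] using this


lemma toeplitz_isHermitian {h : 𝕋 → ℂ} (hsym : ∀ t, conj (h t) = h t) (n : ℕ) :
    (toeplitz n h).IsHermitian := by
  ext i j
  have : conj (fourierCoeff h (((j : ℕ) : ℤ) - ((i : ℕ) : ℤ)))
      = fourierCoeff h (((i : ℕ) : ℤ) - ((j : ℕ) : ℤ)) := by
    have h2 := fourierCoeff_conj h (((i : ℕ) : ℤ) - ((j : ℕ) : ℤ))
    rw [neg_sub] at h2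
    rw [← h2]
    exact fourierCoeff_congr_ae'_s9 (Filter.Eventually.of_forall fun t => hsym t) _
  simpa [toeplitz, Matrix.conjTranspose_apply] using this

lemma semicommutator_aux {g : 𝕋 → ℂ} (hg : MemLp g 2 μ) (n : ℕ) :
    (toeplitz n (fun t => g t * conj (g t)) - (toeplitz n g)ᴴ * toeplitz n g).PosSemidef := by
  rw [Matrix.posSemidef_iff_dotProduct_mulVec]
  constructor
  · exact ((toeplitz_isHermitian (fun t => by simp [_root_.map_mul, mul_comm]) n).sub
      (Matrix.posSemidef_conjTranspose_mul_self _).1)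
  · intro x
    have hgL1 : Integrable g μ := hg.integrable one_le_two
    have hGP : MemLp (fun t => g t * trig x t) 2 μ := memLp_mul_trig hg x
    set c : ℤ → ℝ := fun k => ‖fourierCoeff (fun t => g t * trig x t) k‖ ^ 2 with hc
    have e1 : star x ⬝ᵥ (toeplitz n (fun t => g t * conj (g t)) *ᵥ x)
        = ((∫ t, ‖g t * trig x t‖ ^ 2 ∂μ : ℝ) : ℂ) := by
      rw [dot_toeplitz (integrable_sq hg) x]
      calc ∫ t, conj (trig x t) * ((g t * conj (g t)) * trig x t) ∂μ
          = ∫ t, ((‖g t * trig x t‖ ^ 2 : ℝ) : ℂ) ∂μ := by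
            refine integral_congr_ae (Filter.Eventually.of_forall fun t => ?_)
            beta_reduce
            rw [← mul_conj_eq, _root_.map_mul]
            ring
        _ = ((∫ t, ‖g t * trig x t‖ ^ 2 ∂μ : ℝ) : ℂ) := integral_ofReal
    have e2 : star x ⬝ᵥ (((toeplitz n g)ᴴ * toeplitz n g) *ᵥ x)
        = ((∑ i : Fin n, c ((i : ℕ) : ℤ) : ℝ) : ℂ) := by
      have hy : star x ⬝ᵥ (((toeplitz n g)ᴴ * toeplitz n g) *ᵥ x)
          = star (toeplitz n g *ᵥ x) ⬝ᵥ (toeplitz n g *ᵥ x) := by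
        rw [← Matrix.mulVec_mulVec, dotProduct_mulVec, ← Matrix.star_mulVec]
      rw [hy, dotProduct]
      push_cast
      refine Finset.sum_congr rfl fun i _ => ?_
      rw [Pi.star_apply, RCLike.star_def, mul_comm, mul_conj_eq, hc,
        mulVec_toeplitz hgL1]
    rw [Matrix.sub_mulVec, dotProduct_sub, e1, e2, ← Complex.ofReal_sub]
    rw [Complex.zero_le_real, sub_nonneg]
    have hinj : ∀ i ∈ (Finset.univ : Finset (Fin n)), ∀ j ∈ (Finset.univ : Finset (Fin n)),
        (((i : ℕ) : ℤ) = ((j : ℕ) : ℤ)) → i = j := by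
      intro i _ j _ hij
      exact Fin.val_injective (Nat.cast_injective hij)
    calc ∑ i : Fin n, c ((i : ℕ) : ℤ)
        = ∑ k ∈ (Finset.univ.image fun i : Fin n => ((i : ℕ) : ℤ)), c k :=
          (Finset.sum_image hinj).symm
      _ ≤ ∑' k : ℤ, c k := Summable.sum_le_tsum _ (fun k _ => sq_nonneg _)
          (summable_sq_fourierCoeff_s9 hGP)
      _ = ∫ t, ‖g t * trig x t‖ ^ 2 ∂μ := tsum_sq_fourierCoeff' hGP

lemma toeplitz_conj (f : 𝕋 → ℂ) (n : ℕ) :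
    toeplitz n (fun t => conj (f t)) = (toeplitz n f)ᴴ := by
  ext i j
  simp [toeplitz, Matrix.conjTranspose_apply, fourierCoeff_conj, neg_sub]

/-- for `f ∈ L²(𝕋)` and `n ≥ 1`, both semicommutator matrices
`Tₙ(|f|²) − Tₙ(f̄)·Tₙ(f)` and `Tₙ(|f|²) − Tₙ(f)·Tₙ(f̄)` are Hermitian positive
semidefinite.  Here `Tₙ(f̄) = (Tₙ f)ᴴ` and `|f|² = f·f̄`. -/
theorem semicommutator_posSemidef (f : 𝕋 → ℂ)
    (hf : MemLp f 2 haarAddCircle) (n : ℕ) (hn : 1 ≤ n) :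
    (toeplitz n (fun x => f x * (starRingEnd ℂ) (f x))
      - (toeplitz n f)ᴴ * toeplitz n f).PosSemidef ∧
    (toeplitz n (fun x => f x * (starRingEnd ℂ) (f x))
      - toeplitz n f * (toeplitz n f)ᴴ).PosSemidef := by
  constructor
  · exact semicommutator_aux hf n
  · have h := semicommutator_aux (memLp_conj hf) n
    have h1 : (fun t : 𝕋 => conj (f t) * conj (conj (f t)))
        = fun t : 𝕋 => f t * conj (f t) := by
      funext t; rw [Complex.conj_conj, mul_comm]
    rw [h1, toeplitz_conj f n, Matrix.conjTranspose_conjTranspose] at h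
    exact h
end
end

section
/- Let {X_n} be a sequence of positive semidefinite Hermitian matrices (X_n of size n×n) converging to the zero sequence in Type 1 strong cluster sense, let γ > 0, and let {B_n} be a sequence of Hermitian n×n matrices such that |⟨B_n x, x⟩| ≤ γ^{1/2} · ⟨X_n x, x⟩^{1/2} for all unit vectors x ∈ ℂⁿ and all n. Then {B_n} converges to the zero sequence in Type 1 strong cluster sense; more precisely, if for ε = δ²/γ at most N₁ eigenvalues of X_n are ≥ ε for all large n, then at most 2N₁ eigenvalues of B_n lie outside [−δ, δ] for all large n. -/
open MeasureTheory Matrix AddCircle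
open scoped Real ComplexOrder

noncomputable section

lemma quadForm_eq_inner {n : ℕ} (A : Matrix (Fin n) (Fin n) ℂ)
    (x : EuclideanSpace ℂ (Fin n)) :
    quadForm A x = inner (𝕜 := ℂ) x (Matrix.toEuclideanLin A x) := by
  simp only [quadForm, PiLp.inner_apply, Matrix.toEuclideanLin_apply, dotProduct,
    RCLike.inner_apply]
  refine Finset.sum_congr rfl fun _ _ => ?_
  rw [mul_comm]
  rfl

lemma toEuclideanLin_eigen {n : ℕ} {A : Matrix (Fin n) (Fin n) ℂ} (hA : A.IsHermitian)
    (j : Fin n) :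
    Matrix.toEuclideanLin A (hA.eigenvectorBasis j)
      = ((hA.eigenvalues j : ℂ)) • hA.eigenvectorBasis j := by
  have h := hA.mulVec_eigenvectorBasis j
  apply PiLp.ext
  intro i
  have := congrFun h i
  rw [Matrix.toEuclideanLin_apply]
  simp only [PiLp.smul_apply] at *
  rw [this, RCLike.real_smul_eq_coe_smul (K := ℂ)]
  rfl

lemma quadForm_eq_sum {n : ℕ} {A : Matrix (Fin n) (Fin n) ℂ} (hA : A.IsHermitian)
    (x : EuclideanSpace ℂ (Fin n)) :
    quadForm A x
      = ((∑ i, hA.eigenvalues i * ‖hA.eigenvectorBasis.repr x i‖ ^ 2 : ℝ) : ℂ) := by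
  set b := hA.eigenvectorBasis with hb
  rw [quadForm_eq_inner]
  have hx : Matrix.toEuclideanLin A x
      = ∑ j, (b.repr x j * (hA.eigenvalues j : ℂ)) • b j := by
    conv_lhs => rw [← b.sum_repr x]
    rw [map_sum]
    refine Finset.sum_congr rfl fun j _ => ?_
    rw [_root_.map_smul, toEuclideanLin_eigen hA j, smul_smul]
  rw [hx, inner_sum]
  push_cast
  refine Finset.sum_congr rfl fun j _ => ?_
  rw [inner_smul_right]
  have hrepr : inner (𝕜 := ℂ) x (b j) = (starRingEnd ℂ) (b.repr x j) := by
    rw [b.repr_apply_apply, inner_conj_symm]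
  rw [hrepr]
  have : b.repr x j * (starRingEnd ℂ) (b.repr x j) = (‖b.repr x j‖ ^ 2 : ℝ) := by
    rw [Complex.mul_conj']
    norm_cast
  ring_nf
  rw [mul_comm (b.repr x j), mul_assoc, this]
  push_cast
  ring

lemma card_le_card_aux {n : ℕ} {Bm Xm : Matrix (Fin n) (Fin n) ℂ}
    (hBm : Bm.IsHermitian) (hXm : Xm.PosSemidef)
    {γ δ s : ℝ} (hγ : 0 < γ) (hδ : 0 < δ) (hs : |s| = 1)
    (hdom : ∀ x : Fin n → ℂ, (∑ i, ‖x i‖ ^ 2) = 1 →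
      ‖quadForm Bm x‖ ≤ Real.sqrt γ * Real.sqrt (quadForm Xm x).re)
    {P : Set (Fin n)} (hP : ∀ i ∈ P, δ ≤ s * hBm.eigenvalues i) :
    P.ncard ≤ {i | δ ^ 2 / γ ≤ hXm.isHermitian.eigenvalues i}.ncard := by
  classical
  by_contra hlt
  push_neg at hlt
  set Q : Set (Fin n) := {i | δ ^ 2 / γ ≤ hXm.isHermitian.eigenvalues i} with hQdef
  set bB := hBm.eigenvectorBasis with hbB
  set bX := hXm.isHermitian.eigenvectorBasis with hbX
  -- the linear map whose kernel consists of vectors with B-coordinates supported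
  -- in P and X-coordinates supported off Q
  let f : EuclideanSpace ℂ (Fin n) →ₗ[ℂ] (Fin n → ℂ) :=
    (WithLp.linearEquiv 2 ℂ (Fin n → ℂ)).toLinearMap.comp bX.repr.toLinearEquiv.toLinearMap
  let g : EuclideanSpace ℂ (Fin n) →ₗ[ℂ] (Fin n → ℂ) :=
    (WithLp.linearEquiv 2 ℂ (Fin n → ℂ)).toLinearMap.comp bB.repr.toLinearEquiv.toLinearMap
  let L : EuclideanSpace ℂ (Fin n) →ₗ[ℂ] ((Q → ℂ) × ((Pᶜ : Set (Fin n)) → ℂ)) :=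
    ((LinearMap.funLeft ℂ ℂ (Subtype.val : Q → Fin n)).comp f).prod
      ((LinearMap.funLeft ℂ ℂ (Subtype.val : (Pᶜ : Set (Fin n)) → Fin n)).comp g)
  have hrank := LinearMap.finrank_range_add_finrank_ker L
  have hE : Module.finrank ℂ (EuclideanSpace ℂ (Fin n)) = n := by
    simp [finrank_euclideanSpace]
  have hQcard : Fintype.card Q = Q.ncard := by
    rw [Set.ncard_eq_toFinset_card', Set.toFinset_card]
  have hPcard : Fintype.card P = P.ncard := by
    rw [Set.ncard_eq_toFinset_card', Set.toFinset_card]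
  have hPn : P.ncard ≤ n := by
    have := Set.ncard_le_ncard (Set.subset_univ P) Set.finite_univ
    simpa [Set.ncard_univ] using this
  have hPc : Fintype.card (Pᶜ : Set (Fin n)) = n - P.ncard := by
    rw [Fintype.card_compl_set, hPcard, Fintype.card_fin]
  have hcod : Module.finrank ℂ ((Q → ℂ) × ((Pᶜ : Set (Fin n)) → ℂ))
      = Q.ncard + (n - P.ncard) := by
    rw [Module.finrank_prod, Module.finrank_pi, Module.finrank_pi, hQcard, hPc]
  have hker : 0 < Module.finrank ℂ (LinearMap.ker L) := by
    have hr : Module.finrank ℂ (LinearMap.range L) ≤ Q.ncard + (n - P.ncard) := by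
      rw [← hcod]; exact Submodule.finrank_le _
    rw [hE] at hrank
    omega
  obtain ⟨x, hx0⟩ := Module.finrank_pos_iff_exists_ne_zero.mp hker
  obtain ⟨x, hxker⟩ := x
  have hx0' : x ≠ 0 := by simpa [Submodule.mk_eq_zero] using hx0
  -- normalize
  set c : ℂ := ((‖x‖⁻¹ : ℝ) : ℂ) with hc
  set y : EuclideanSpace ℂ (Fin n) := c • x with hy
  have hyker : y ∈ LinearMap.ker L := Submodule.smul_mem _ _ hxker
  have hxnorm : (0 : ℝ) < ‖x‖ := norm_pos_iff.mpr hx0'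
  have hynorm : ‖y‖ = 1 := by
    rw [hy, norm_smul, hc, Complex.norm_real, Real.norm_eq_abs,
      abs_of_nonneg (inv_nonneg.mpr hxnorm.le), inv_mul_cancel₀ hxnorm.ne']
  -- coordinate vanishing
  have hLy : L y = 0 := hyker
  have hXcoord : ∀ i ∈ Q, bX.repr y i = 0 := by
    intro i hi
    have := congrFun (congrArg Prod.fst hLy) ⟨i, hi⟩
    simpa [L, f] using this
  have hBcoord : ∀ i ∉ P, bB.repr y i = 0 := by
    intro i hi
    have := congrFun (congrArg Prod.snd hLy) ⟨i, hi⟩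
    simpa [L, g] using this
  -- Parseval
  have hnorm_sq : ∀ z : EuclideanSpace ℂ (Fin n), ‖z‖ = 1 → ∑ i, ‖z i‖ ^ 2 = 1 := by
    intro z hz
    have h := EuclideanSpace.norm_eq z
    rw [hz] at h
    have h2 : Real.sqrt (∑ i, ‖z i‖ ^ 2) = 1 := h.symm
    have := Real.sqrt_eq_one.mp h2
    exact this
  have hsum : (∑ i, ‖y i‖ ^ 2) = 1 := hnorm_sq y hynorm
  have hsumB : ∑ i, ‖bB.repr y i‖ ^ 2 = 1 := by
    refine hnorm_sq (bB.repr y) ?_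
    rw [LinearIsometryEquiv.norm_map, hynorm]
  have hsumX : ∑ i, ‖bX.repr y i‖ ^ 2 = 1 := by
    refine hnorm_sq (bX.repr y) ?_
    rw [LinearIsometryEquiv.norm_map, hynorm]
  -- lower bound on the B quadratic form
  set tB : ℝ := ∑ i, hBm.eigenvalues i * ‖bB.repr y i‖ ^ 2 with htB
  have hqB : quadForm Bm y = (tB : ℂ) := quadForm_eq_sum hBm y
  have hlow : δ ≤ s * tB := by
    have : ∀ i ∈ Finset.univ, δ * ‖bB.repr y i‖ ^ 2
        ≤ s * (hBm.eigenvalues i * ‖bB.repr y i‖ ^ 2) := by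
      intro i _
      by_cases hiP : i ∈ P
      · have := hP i hiP
        have h2 : (0:ℝ) ≤ ‖bB.repr y i‖ ^ 2 := by positivity
        calc δ * ‖bB.repr y i‖ ^ 2 ≤ (s * hBm.eigenvalues i) * ‖bB.repr y i‖ ^ 2 :=
              mul_le_mul_of_nonneg_right this h2
          _ = s * (hBm.eigenvalues i * ‖bB.repr y i‖ ^ 2) := by ring
      · rw [hBcoord i hiP]; simp
    calc δ = δ * (∑ i, ‖bB.repr y i‖ ^ 2) := by rw [hsumB, mul_one]
      _ = ∑ i, δ * ‖bB.repr y i‖ ^ 2 := by rw [Finset.mul_sum]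
      _ ≤ ∑ i, s * (hBm.eigenvalues i * ‖bB.repr y i‖ ^ 2) := Finset.sum_le_sum this
      _ = s * tB := by rw [htB, Finset.mul_sum]
  have hlowB : δ ≤ ‖quadForm Bm y‖ := by
    rw [hqB, Complex.norm_real, Real.norm_eq_abs]
    calc δ ≤ s * tB := hlow
      _ ≤ |s * tB| := le_abs_self _
      _ = |tB| := by rw [abs_mul, hs, one_mul]
  -- upper bound on the X quadratic form
  set tX : ℝ := ∑ i, hXm.isHermitian.eigenvalues i * ‖bX.repr y i‖ ^ 2 with htX
  have hqX : quadForm Xm y = (tX : ℂ) := quadForm_eq_sum hXm.isHermitian y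
  obtain ⟨i₀, hi₀⟩ : ∃ i, bX.repr y i ≠ 0 := by
    by_contra hall
    push_neg at hall
    have hz : (∑ i, ‖bX.repr y i‖ ^ 2) = 0 := by simp [hall]
    rw [hsumX] at hz
    exact one_ne_zero hz
  have hi₀Q : i₀ ∉ Q := fun h => hi₀ (hXcoord i₀ h)
  have htXlt : tX < δ ^ 2 / γ := by
    have hle : ∀ i ∈ Finset.univ, hXm.isHermitian.eigenvalues i * ‖bX.repr y i‖ ^ 2
        ≤ (δ ^ 2 / γ) * ‖bX.repr y i‖ ^ 2 := by
      intro i _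
      by_cases hiQ : i ∈ Q
      · rw [hXcoord i hiQ]; simp
      · have : hXm.isHermitian.eigenvalues i < δ ^ 2 / γ := by
          simpa [hQdef] using hiQ
        exact mul_le_mul_of_nonneg_right this.le (by positivity)
    have hstrict : hXm.isHermitian.eigenvalues i₀ * ‖bX.repr y i₀‖ ^ 2
        < (δ ^ 2 / γ) * ‖bX.repr y i₀‖ ^ 2 := by
      have h1 : hXm.isHermitian.eigenvalues i₀ < δ ^ 2 / γ := by
        simpa [hQdef] using hi₀Q
      have h2 : (0:ℝ) < ‖bX.repr y i₀‖ ^ 2 := pow_pos (norm_pos_iff.mpr hi₀) 2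
      exact mul_lt_mul_of_pos_right h1 h2
    calc tX < ∑ i, (δ ^ 2 / γ) * ‖bX.repr y i‖ ^ 2 :=
          Finset.sum_lt_sum hle ⟨i₀, Finset.mem_univ _, hstrict⟩
      _ = δ ^ 2 / γ := by rw [← Finset.mul_sum, hsumX, mul_one]
  have htXnn : 0 ≤ tX := by
    refine Finset.sum_nonneg fun i _ => ?_
    exact mul_nonneg (hXm.eigenvalues_nonneg i) (by positivity)
  have hupper : Real.sqrt γ * Real.sqrt (quadForm Xm y).re < δ := by
    rw [hqX, Complex.ofReal_re]
    have h1 : Real.sqrt tX < Real.sqrt (δ ^ 2 / γ) := Real.sqrt_lt_sqrt htXnn htXlt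
    have h2 : Real.sqrt γ * Real.sqrt (δ ^ 2 / γ) = δ := by
      rw [← Real.sqrt_mul hγ.le]
      rw [mul_div_cancel₀ _ hγ.ne']
      exact Real.sqrt_sq hδ.le
    calc Real.sqrt γ * Real.sqrt tX < Real.sqrt γ * Real.sqrt (δ ^ 2 / γ) := by
          exact mul_lt_mul_of_pos_left h1 (Real.sqrt_pos.mpr hγ)
      _ = δ := h2
  have := hdom y hsum
  linarith [hlowB, hupper, this]


lemma part2_aux {n : ℕ} {Bm Xm : Matrix (Fin n) (Fin n) ℂ}
    (hBm : Bm.IsHermitian) (hXm : Xm.PosSemidef)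
    {γ δ : ℝ} (hγ : 0 < γ) (hδ : 0 < δ)
    (hdom : ∀ x : Fin n → ℂ, (∑ i, ‖x i‖ ^ 2) = 1 →
      ‖quadForm Bm x‖ ≤ Real.sqrt γ * Real.sqrt (quadForm Xm x).re)
    {N₁ : ℕ} (hQ : {i : Fin n | δ ^ 2 / γ ≤ hXm.isHermitian.eigenvalues i}.ncard ≤ N₁) :
    {i : Fin n | δ < |hBm.eigenvalues i|}.ncard ≤ 2 * N₁ := by
  have h1 : ({i : Fin n | δ < hBm.eigenvalues i}).ncard
      ≤ {i : Fin n | δ ^ 2 / γ ≤ hXm.isHermitian.eigenvalues i}.ncard := by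
    refine card_le_card_aux hBm hXm hγ hδ (s := 1) (by norm_num) hdom ?_
    intro i hi
    simp only [Set.mem_setOf_eq] at hi
    linarith
  have h2 : ({i : Fin n | hBm.eigenvalues i < -δ}).ncard
      ≤ {i : Fin n | δ ^ 2 / γ ≤ hXm.isHermitian.eigenvalues i}.ncard := by
    refine card_le_card_aux hBm hXm hγ hδ (s := -1) (by norm_num) hdom ?_
    intro i hi
    simp only [Set.mem_setOf_eq] at hi
    linarith
  have hunion : {i : Fin n | δ < |hBm.eigenvalues i|}
      = {i : Fin n | δ < hBm.eigenvalues i} ∪ {i : Fin n | hBm.eigenvalues i < -δ} := by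
    ext i
    simp only [Set.mem_setOf_eq, Set.mem_union, lt_abs]
    constructor
    · rintro (h | h)
      · exact Or.inl h
      · exact Or.inr (by linarith)
    · rintro (h | h)
      · exact Or.inl h
      · exact Or.inr (by linarith)
  calc {i : Fin n | δ < |hBm.eigenvalues i|}.ncard
      ≤ ({i : Fin n | δ < hBm.eigenvalues i}).ncard
        + ({i : Fin n | hBm.eigenvalues i < -δ}).ncard := by
        rw [hunion]; exact Set.ncard_union_le _ _
    _ ≤ N₁ + N₁ := Nat.add_le_add (h1.trans hQ) (h2.trans hQ)
    _ = 2 * N₁ := by ring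

/-- the eigenvalue counting argument in the proof of Theorem 1.3:
if `{Xₙ}` is a sequence of positive semidefinite matrices converging to the zero
sequence in Type 1 strong cluster sense, `γ > 0`, and `{Bₙ}` is a sequence of
Hermitian matrices with `|⟨Bₙ x, x⟩| ≤ √γ · ⟨Xₙ x, x⟩^{1/2}` for all (Euclidean) unit
vectors `x`, then `{Bₙ}` converges to the zero sequence in Type 1 strong cluster
sense; more precisely, for `δ > 0`, if at most `N₁` eigenvalues of `Xₙ` are `≥ δ²/γ`
for all `n > N₂`, then at most `2·N₁` eigenvalues of `Bₙ` lie outside `[−δ, δ]` for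
all `n > N₂`. -/
theorem type1StrongCluster_of_dominated
    (X B : ∀ n : ℕ, Matrix (Fin n) (Fin n) ℂ)
    (hX : ∀ n, (X n).PosSemidef) (hB : ∀ n, (B n).IsHermitian)
    (γ : ℝ) (hγ : 0 < γ)
    (hXcluster : Type1StrongCluster X (fun n => (hX n).isHermitian))
    (hdom : ∀ n : ℕ, ∀ x : Fin n → ℂ, (∑ i, ‖x i‖ ^ 2) = 1 →
      ‖quadForm (B n) x‖ ≤ Real.sqrt γ * Real.sqrt (quadForm (X n) x).re) :
    Type1StrongCluster B hB ∧
      ∀ δ > (0 : ℝ), ∀ N₁ N₂ : ℕ,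
        (∀ n : ℕ, N₂ < n →
          {i : Fin n | δ ^ 2 / γ ≤ (hX n).isHermitian.eigenvalues i}.ncard ≤ N₁) →
        ∀ n : ℕ, N₂ < n →
          {i : Fin n | δ < |(hB n).eigenvalues i|}.ncard ≤ 2 * N₁ := by
  have hmain : ∀ δ > (0 : ℝ), ∀ N₁ N₂ : ℕ,
      (∀ n : ℕ, N₂ < n →
        {i : Fin n | δ ^ 2 / γ ≤ (hX n).isHermitian.eigenvalues i}.ncard ≤ N₁) →
      ∀ n : ℕ, N₂ < n →
        {i : Fin n | δ < |(hB n).eigenvalues i|}.ncard ≤ 2 * N₁ := by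
    intro δ hδ N₁ N₂ hXN n hn
    exact part2_aux (hB n) (hX n) hγ hδ (hdom n) (hXN n hn)
  refine ⟨?_, hmain⟩
  intro ε hε
  obtain ⟨N₁, N₂, hN⟩ := hXcluster ((ε / 2) ^ 2 / γ) (by positivity)
  refine ⟨2 * N₁, N₂, fun n hn => ?_⟩
  have hX' : ∀ m : ℕ, N₂ < m →
      {i : Fin m | (ε / 2) ^ 2 / γ ≤ (hX m).isHermitian.eigenvalues i}.ncard ≤ N₁ := by
    intro m hm
    refine le_trans (le_of_eq ?_) (hN m hm)
    congr 1
    ext i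
    simp only [Set.mem_setOf_eq, abs_of_nonneg ((hX m).eigenvalues_nonneg i)]
  have h := hmain (ε / 2) (by positivity) N₁ N₂ hX' n hn
  refine le_trans (Set.ncard_le_ncard ?_ (Set.toFinite _)) h
  intro i hi
  simp only [Set.mem_setOf_eq] at hi ⊢
  linarith
end
end

section
/- Let {A_n} be a sequence of Hermitian matrices, A_n of size n×n. Then {A_n} converges to the zero sequence in Type 1 strong cluster sense if and only if {A_n} converges to the zero sequence in Type 2 strong cluster sense. -/
open MeasureTheory Matrix AddCircle
open scoped Real ComplexOrder

noncomputable section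

lemma clm_apply' {n : ℕ} (M : Matrix (Fin n) (Fin n) ℂ) (x : EuclideanSpace ℂ (Fin n)) :
    (Matrix.toEuclideanCLM (𝕜 := ℂ) M) x =
      (WithLp.equiv 2 _).symm (M *ᵥ (WithLp.equiv 2 _ x)) := by
  have := Matrix.ofLp_toEuclideanCLM (𝕜 := ℂ) M x
  exact (WithLp.equiv 2 _).injective (by simpa using this)

lemma clm_basis' {n : ℕ} (M : Matrix (Fin n) (Fin n) ℂ)
    (b : OrthonormalBasis (Fin n) ℂ (EuclideanSpace ℂ (Fin n))) (μ : ℂ) (j : Fin n)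
    (h : M *ᵥ ⇑(b j) = μ • ⇑(b j)) :
    (Matrix.toEuclideanCLM (𝕜 := ℂ) M) (b j) = μ • b j := by
  rw [clm_apply']
  ext i
  have := congrFun h i
  simpa using this

lemma repr_clm' {n : ℕ} (b : OrthonormalBasis (Fin n) ℂ (EuclideanSpace ℂ (Fin n)))
    (T : EuclideanSpace ℂ (Fin n) →L[ℂ] EuclideanSpace ℂ (Fin n)) (μ : Fin n → ℂ)
    (hT : ∀ i, T (b i) = μ i • b i) (y : EuclideanSpace ℂ (Fin n)) (i : Fin n) :
    b.repr (T y) i = μ i * b.repr y i := by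
  have h1 : T y = ∑ j, (μ j * b.repr y j) • b j := by
    conv_lhs => rw [← b.sum_repr y]
    rw [map_sum]
    refine Finset.sum_congr rfl fun j _ => ?_
    rw [T.map_smul, hT, smul_smul, mul_comm]
  rw [h1, map_sum]
  simp only [_root_.map_smul, b.repr_self]
  rw [WithLp.ofLp_sum, Finset.sum_apply]
  simp [EuclideanSpace.single_apply]

lemma norm_sq_repr' {n : ℕ} (b : OrthonormalBasis (Fin n) ℂ (EuclideanSpace ℂ (Fin n)))
    (y : EuclideanSpace ℂ (Fin n)) :
    ‖y‖ ^ 2 = ∑ i, ‖b.repr y i‖ ^ 2 := by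
  rw [← b.repr.norm_map y, EuclideanSpace.norm_eq, Real.sq_sqrt (by positivity)]

/-- Forward ingredient: the Type-2 splitting from eigenvalue clustering. -/
lemma forward_split {n : ℕ} {A : Matrix (Fin n) (Fin n) ℂ} (hA : A.IsHermitian)
    {ε : ℝ} (hε : 0 < ε) :
    ∃ R E : Matrix (Fin n) (Fin n) ℂ, A = R + E ∧
      R.rank ≤ {i : Fin n | ε ≤ |hA.eigenvalues i|}.ncard ∧ opNorm E ≤ ε := by
  classical
  set lam := hA.eigenvalues with hlam
  set b := hA.eigenvectorBasis with hb
  set U := (hA.eigenvectorUnitary : Matrix (Fin n) (Fin n) ℂ) with hU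
  set dR : Fin n → ℂ := fun i => if ε ≤ |lam i| then (lam i : ℂ) else 0 with hdR
  set dE : Fin n → ℂ := fun i => if ε ≤ |lam i| then 0 else (lam i : ℂ) with hdE
  refine ⟨U * diagonal dR * star U, U * diagonal dE * star U, ?_, ?_, ?_⟩
  · have hd : diagonal (RCLike.ofReal ∘ lam : Fin n → ℂ) = diagonal dR + diagonal dE := by
      ext i j
      by_cases hij : i = j
      · subst hij
        by_cases h : ε ≤ |lam i| <;>
          simp [Matrix.add_apply, Matrix.diagonal_apply_eq, hdR, hdE, h]
      · simp [Matrix.add_apply, Matrix.diagonal_apply_ne _ hij]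
    conv_lhs => rw [hA.spectral_theorem]
    rw [hd, Unitary.conjStarAlgAut_apply, Matrix.mul_add, Matrix.add_mul]
  · calc (U * diagonal dR * star U).rank ≤ (U * diagonal dR).rank := rank_mul_le_left _ _
      _ ≤ (diagonal dR).rank := rank_mul_le_right _ _
      _ = Fintype.card {i // dR i ≠ 0} := rank_diagonal dR
      _ = Set.ncard {i : Fin n | dR i ≠ 0} := by
          rw [← Nat.card_coe_set_eq, Nat.card_eq_fintype_card]
          exact Fintype.card_congr (Equiv.refl _)
      _ ≤ _ := by
          refine Set.ncard_le_ncard ?_ (Set.toFinite _)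
          intro i hi
          simp only [hdR, ne_eq, Set.mem_setOf_eq] at hi ⊢
          by_contra hc
          simp [hc] at hi
  · -- norm bound
    set E := U * diagonal dE * star U with hE
    have hEb : ∀ j, (Matrix.toEuclideanCLM (𝕜 := ℂ) E) (b j) = dE j • b j := by
      intro j
      apply clm_basis'
      rw [hE, ← mulVec_mulVec, ← mulVec_mulVec, hA.star_eigenvectorUnitary_mulVec,
        diagonal_mulVec_single]
      have h3 : Pi.single j (dE j * 1) = dE j • (Pi.single j (1 : ℂ) : Fin n → ℂ) := by
        funext k
        by_cases h : k = j <;> simp [Pi.single_apply, h]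
      rw [h3, mulVec_smul, hA.eigenvectorUnitary_mulVec]
    rw [opNorm]
    apply ContinuousLinearMap.opNorm_le_bound _ hε.le
    intro y
    have hn1 : ‖(Matrix.toEuclideanCLM (𝕜 := ℂ) E) y‖ ^ 2 ≤ (ε * ‖y‖) ^ 2 := by
      rw [norm_sq_repr' b ((Matrix.toEuclideanCLM (𝕜 := ℂ) E) y), mul_pow,
        norm_sq_repr' b y, Finset.mul_sum]
      apply Finset.sum_le_sum
      intro i _
      rw [repr_clm' b _ dE hEb y i, norm_mul, mul_pow]
      apply mul_le_mul_of_nonneg_right _ (by positivity)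
      have : ‖dE i‖ ≤ ε := by
        by_cases h : ε ≤ |lam i|
        · simp [hdE, h, hε.le]
        · push_neg at h
          simp only [hdE, h, not_le, if_neg (not_le.mpr h)]
          rw [Complex.norm_real]
          exact (le_of_lt h)
      nlinarith [norm_nonneg (dE i)]
    have h0 : (0:ℝ) ≤ ε * ‖y‖ := by positivity
    nlinarith [norm_nonneg ((Matrix.toEuclideanCLM (𝕜 := ℂ) E) y)]

/-- Backward ingredient: eigenvalue count bounded by rank of the perturbation. -/
lemma backward_count {n : ℕ} {A : Matrix (Fin n) (Fin n) ℂ} (hA : A.IsHermitian)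
    {ε : ℝ} (hε : 0 < ε) (R E : Matrix (Fin n) (Fin n) ℂ)
    (hsum : A = R + E) (hEn : opNorm E < ε) :
    {i : Fin n | ε ≤ |hA.eigenvalues i|}.ncard ≤ R.rank := by
  classical
  set lam := hA.eigenvalues with hlam
  set b := hA.eigenvectorBasis with hb
  set S := {i : Fin n | ε ≤ |lam i|} with hS
  by_contra hlt
  push_neg at hlt
  -- subspace spanned by the eigenvectors with large eigenvalues
  haveI : Fintype ↥S := Fintype.ofFinite _
  set v : S → EuclideanSpace ℂ (Fin n) := fun i => b i.1 with hv
  have hli : LinearIndependent ℂ v :=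
    b.orthonormal.linearIndependent.comp Subtype.val Subtype.val_injective
  set W : Submodule ℂ (EuclideanSpace ℂ (Fin n)) := Submodule.span ℂ (Set.range v) with hW
  have hdimW : Module.finrank ℂ W = S.ncard := by
    rw [finrank_span_eq_card hli, ← Nat.card_coe_set_eq, Nat.card_eq_fintype_card]
  set f : W →ₗ[ℂ] EuclideanSpace ℂ (Fin n) :=
    ((Matrix.toEuclideanCLM (𝕜 := ℂ) R : EuclideanSpace ℂ (Fin n) →L[ℂ]
      EuclideanSpace ℂ (Fin n)) : EuclideanSpace ℂ (Fin n) →ₗ[ℂ]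
      EuclideanSpace ℂ (Fin n)).domRestrict W with hf
  have hrange : Module.finrank ℂ (LinearMap.range f) ≤ R.rank := by
    have h1 : LinearMap.range f ≤ LinearMap.range (Matrix.toEuclideanLin (𝕜 := ℂ) R) := by
      rintro x ⟨⟨z, hz⟩, rfl⟩
      rw [hf]
      exact ⟨z, by rw [← Matrix.coe_toEuclideanCLM_eq_toEuclideanLin]; rfl⟩
    calc Module.finrank ℂ (LinearMap.range f)
        ≤ Module.finrank ℂ (LinearMap.range (Matrix.toEuclideanLin (𝕜 := ℂ) R)) :=
          Submodule.finrank_mono h1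
      _ = R.rank := by
          rw [Matrix.rank_eq_finrank_range_toLin R (PiLp.basisFun 2 ℂ (Fin n))
            (PiLp.basisFun 2 ℂ (Fin n)), Matrix.toEuclideanLin_eq_toLin]
  have hker : 0 < Module.finrank ℂ (LinearMap.ker f) := by
    have := LinearMap.finrank_range_add_finrank_ker f
    omega
  -- get a nonzero vector in the kernel
  have hne : LinearMap.ker f ≠ ⊥ := by
    intro hbot
    rw [hbot] at hker
    simp at hker
  obtain ⟨x, hx, hx0⟩ := Submodule.exists_mem_ne_zero_of_ne_bot hne
  set y : EuclideanSpace ℂ (Fin n) := (x : EuclideanSpace ℂ (Fin n)) with hy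
  have hy0 : y ≠ 0 := fun h => hx0 (Subtype.ext h)
  have hyW : y ∈ W := x.2
  have hRy : (Matrix.toEuclideanCLM (𝕜 := ℂ) R) y = 0 := hx
  -- coefficients off S vanish
  have hcoef : ∀ i : Fin n, i ∉ S → b.repr y i = 0 := by
    intro i hi
    obtain ⟨c, hc⟩ := (Submodule.mem_span_range_iff_exists_fun ℂ).mp hyW
    rw [← hc, map_sum]
    simp only [_root_.map_smul, hv, b.repr_self]
    rw [WithLp.ofLp_sum, Finset.sum_apply]
    apply Finset.sum_eq_zero
    intro j _
    have hij : i ≠ (j : Fin n) := fun h => hi (h ▸ j.2)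
    simp [EuclideanSpace.single_apply, Ne.symm hij, hij]
  -- eigen-action of A
  have hAb : ∀ j, (Matrix.toEuclideanCLM (𝕜 := ℂ) A) (b j) = ((lam j : ℂ)) • b j := by
    intro j
    apply clm_basis'
    rw [hA.mulVec_eigenvectorBasis]
    funext i
    simp [RCLike.real_smul_eq_coe_smul (K := ℂ)]
    rfl
  -- lower bound
  have hlow : (ε * ‖y‖) ^ 2 ≤ ‖(Matrix.toEuclideanCLM (𝕜 := ℂ) A) y‖ ^ 2 := by
    rw [norm_sq_repr' b ((Matrix.toEuclideanCLM (𝕜 := ℂ) A) y), mul_pow,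
      norm_sq_repr' b y, Finset.mul_sum]
    apply Finset.sum_le_sum
    intro i _
    rw [repr_clm' b _ (fun j => (lam j : ℂ)) hAb y i, norm_mul, mul_pow]
    by_cases h : i ∈ S
    · apply mul_le_mul_of_nonneg_right _ (by positivity)
      have : ε ≤ |lam i| := h
      have h2 : ‖((lam i : ℂ))‖ = |lam i| := by
        rw [Complex.norm_real, Real.norm_eq_abs]
      nlinarith
    · rw [hcoef i h]
      simp
  have hlow' : ε * ‖y‖ ≤ ‖(Matrix.toEuclideanCLM (𝕜 := ℂ) A) y‖ := by
    nlinarith [norm_nonneg ((Matrix.toEuclideanCLM (𝕜 := ℂ) A) y), mul_nonneg hε.le (norm_nonneg y)]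
  -- upper bound
  have hAy : (Matrix.toEuclideanCLM (𝕜 := ℂ) A) y = (Matrix.toEuclideanCLM (𝕜 := ℂ) E) y := by
    rw [hsum, map_add]
    simp [ContinuousLinearMap.add_apply, hRy]
  have hup : ‖(Matrix.toEuclideanCLM (𝕜 := ℂ) E) y‖ ≤ opNorm E * ‖y‖ :=
    ContinuousLinearMap.le_opNorm _ y
  have hypos : 0 < ‖y‖ := norm_pos_iff.mpr hy0
  have : ε * ‖y‖ < ε * ‖y‖ :=
    lt_of_le_of_lt (hAy ▸ hlow' |>.trans hup)
      (by exact mul_lt_mul_of_pos_right hEn hypos)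
  exact lt_irrefl _ this


/-- Remark 1.4 of the paper: for a sequence of Hermitian matrices,
convergence to the zero sequence in Type 1 strong cluster sense and in Type 2 strong
cluster sense are equivalent. -/
theorem type1StrongCluster_iff_type2StrongCluster
    (A : ∀ n : ℕ, Matrix (Fin n) (Fin n) ℂ) (hA : ∀ n, (A n).IsHermitian) :
    Type1StrongCluster A hA ↔ Type2StrongCluster A := by
  constructor
  · intro h1 ε hε
    obtain ⟨N₁, N₂, h⟩ := h1 (ε / 2) (by positivity)
    refine ⟨N₁, N₂, fun n hn => ?_⟩
    obtain ⟨R, E, hRE, hrank, hE⟩ := forward_split (hA n) (show (0:ℝ) < ε / 2 by positivity)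
    exact ⟨R, E, hRE, hrank.trans (h n hn), lt_of_le_of_lt hE (by linarith)⟩
  · intro h2 ε hε
    obtain ⟨N₁, N₂, h⟩ := h2 ε hε
    refine ⟨N₁, N₂, fun n hn => ?_⟩
    obtain ⟨R, E, hRE, hrank, hE⟩ := h n hn
    exact (backward_count (hA n) hε R E hRE hE).trans hrank
end
end
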